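/- arXiv:1208.4326 — 5 statements merged into one kernel-verified Lean document; each statement's English description precedes it below -/
import Mathlib

section
/- Let k ≥ 3 be an odd integer, λ = (k−1)/2, N a positive integer with 4 ∣ N, and χ a Dirichlet character modulo N with values in ℂ. Let a : ℕ → ℂ, let t be a squarefree positive integer, and let p be any prime (no coprimality with t or N is assumed). Then for every positive integer n, (Sh_t(U_p a))(n) = (W_p(Sh_t a))(n); that is, the Shimura-lift coefficient map intertwines the half-integral weight Hecke coefficient operator U_p with the integral weight Hecke coefficient operator W_p. -/
open Finset

/-- ψ_t(m) = χ(m)·((−1)^λ t ∣ m) (Jacobi symbol) for odd m, 0 for even m,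
    where λ = (k−1)/2. -/
noncomputable def psi (k N : ℕ) (χ : DirichletCharacter ℂ N) (t : ℕ) (m : ℕ) : ℂ :=
  if Odd m then
    χ (m : ZMod N) * ((jacobiSym ((-1) ^ ((k - 1) / 2) * (t : ℤ)) m : ℤ) : ℂ)
  else 0

/-- The Shimura-lift coefficient map:
    (Sh_t a)(n) = ∑_{d ∣ n} ψ_t(d)·d^{λ−1}·a(t·(n/d)²). -/
noncomputable def ShLift (k N : ℕ) (χ : DirichletCharacter ℂ N) (t : ℕ) (a : ℕ → ℂ)
    (n : ℕ) : ℂ :=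
  ∑ d ∈ n.divisors, psi k N χ t d * (d : ℂ) ^ ((k - 1) / 2 - 1) * a (t * (n / d) ^ 2)

/-- The half-integral weight Hecke coefficient operator U_p (Shimura's formula for T_{p²}):
    (U_p a)(n) = a(p²n) + χ(p)·((−1)^λ n ∣ p)·p^{λ−1}·a(n)
                 + χ(p)²·p^{k−2}·[a(n/p²) if p² ∣ n else 0]. -/
noncomputable def Uop (k N : ℕ) (χ : DirichletCharacter ℂ N) (p : ℕ) [Fact p.Prime]
    (a : ℕ → ℂ) (n : ℕ) : ℂ :=
  a (p ^ 2 * n)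
    + χ (p : ZMod N) * ((legendreSym p ((-1) ^ ((k - 1) / 2) * (n : ℤ)) : ℤ) : ℂ)
        * (p : ℂ) ^ ((k - 1) / 2 - 1) * a n
    + χ (p : ZMod N) ^ 2 * (p : ℂ) ^ (k - 2) * (if p ^ 2 ∣ n then a (n / p ^ 2) else 0)

/-- The integral weight Hecke coefficient operator W_p:
    (W_p A)(n) = A(pn) + χ(p)²·p^{k−2}·[A(n/p) if p ∣ n else 0]. -/
noncomputable def Wop (k N : ℕ) (χ : DirichletCharacter ℂ N) (p : ℕ) (A : ℕ → ℂ)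
    (n : ℕ) : ℂ :=
  A (p * n) + χ (p : ZMod N) ^ 2 * (p : ℂ) ^ (k - 2) * (if p ∣ n then A (n / p) else 0)

/- ---------------------------------------------------------------------------
Auxiliary lemmas
--------------------------------------------------------------------------- -/

lemma pow_mul_left_inj {p : ℕ} (hp : p.Prime) {i i' c c' : ℕ} (hc : ¬ p ∣ c) (hc' : ¬ p ∣ c')
    (hc0 : c ≠ 0) (h : p ^ i * c = p ^ i' * c') : i = i' ∧ c = c' := by
  have key : ∀ {a a' b b' : ℕ}, ¬ p ∣ b → ¬ p ∣ b' → a ≤ a' → p ^ a * b = p ^ a' * b' → a = a' := by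
    intro a a' b b' hb hb' haa' hh
    by_contra hne
    have hlt : a < a' := lt_of_le_of_ne haa' hne
    have h2 : p ^ a' * b' = p ^ a * (p ^ (a' - a) * b') := by
      rw [← mul_assoc, ← pow_add, Nat.add_sub_cancel' haa']
    have h3 : b = p ^ (a' - a) * b' := Nat.eq_of_mul_eq_mul_left (pow_pos hp.pos a) (hh.trans h2)
    exact hb (h3 ▸ Dvd.dvd.mul_right (dvd_pow_self p (by omega)) b')
  have hi : i = i' := by
    rcases le_total i i' with hle | hle
    · exact key hc hc' hle h
    · exact (key hc' hc hle h.symm).symm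
  subst hi
  exact ⟨rfl, Nat.eq_of_mul_eq_mul_left (pow_pos hp.pos i) h⟩

lemma sum_divisors_primePow_mul {M : Type*} [AddCommMonoid M] {p : ℕ} (hp : p.Prime)
    {m : ℕ} (hm : m ≠ 0) (hpm : ¬ p ∣ m) (j : ℕ) (f : ℕ → M) :
    ∑ d ∈ (p ^ j * m).divisors, f d
      = ∑ i ∈ Finset.range (j + 1), ∑ c ∈ m.divisors, f (p ^ i * c) := by
  rw [Nat.divisors_mul, Finset.mul_def, Finset.sum_image, Finset.sum_product,
    Nat.sum_divisors_prime_pow hp]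
  rintro ⟨x, y⟩ hxy ⟨x', y'⟩ hxy' hh
  simp only [Finset.coe_product, Set.mem_prod, Finset.mem_coe, Finset.mem_product, Nat.mem_divisors] at hxy hxy'
  obtain ⟨i, hi, rfl⟩ := (Nat.dvd_prime_pow hp).mp hxy.1.1
  obtain ⟨i', hi', rfl⟩ := (Nat.dvd_prime_pow hp).mp hxy'.1.1
  have hy : ¬ p ∣ y := fun h => hpm (h.trans hxy.2.1)
  have hy' : ¬ p ∣ y' := fun h => hpm (h.trans hxy'.2.1)
  have hy0 : y ≠ 0 := fun h => hm (Nat.eq_zero_of_zero_dvd (h ▸ hxy.2.1))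
  obtain ⟨h1, h2⟩ := pow_mul_left_inj hp hy hy' hy0 hh
  simp [h1, h2]

lemma psi_mul (k N : ℕ) (χ : DirichletCharacter ℂ N) (t : ℕ) (a b : ℕ) :
    psi k N χ t (a * b) = psi k N χ t a * psi k N χ t b := by
  rcases eq_or_ne a 0 with rfl | ha
  · simp [psi, Nat.odd_mul]
  rcases eq_or_ne b 0 with rfl | hb
  · simp [psi, Nat.odd_mul]
  unfold psi
  by_cases hA : Odd a <;> by_cases hB : Odd b
  · rw [if_pos (Nat.odd_mul.mpr ⟨hA, hB⟩), if_pos hA, if_pos hB,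
      jacobiSym.mul_right' _ ha hb]
    push_cast
    rw [map_mul]
    ring
  · rw [if_neg (by rw [Nat.odd_mul]; tauto), if_neg hB, mul_zero]
  · rw [if_neg (by rw [Nat.odd_mul]; tauto), if_neg hA, zero_mul]
  · rw [if_neg (by rw [Nat.odd_mul]; tauto), if_neg hA, zero_mul]

lemma chi_two_eq_zero {N : ℕ} (hN4 : 4 ∣ N) (χ : DirichletCharacter ℂ N) :
    χ ((2 : ℕ) : ZMod N) = 0 := by
  apply MulChar.map_nonunit
  rw [ZMod.isUnit_iff_coprime]
  intro hco
  have h2 : (2 : ℕ) ∣ N := dvd_trans ⟨2, rfl⟩ hN4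
  have h3 := Nat.dvd_gcd (dvd_refl 2) h2
  rw [Nat.Coprime] at hco
  rw [hco] at h3
  have := Nat.le_of_dvd one_pos h3
  omega

lemma psi_prime_eq (k N : ℕ) (χ : DirichletCharacter ℂ N) (t : ℕ)
    (hN4 : 4 ∣ N) (p : ℕ) [hp : Fact p.Prime] :
    psi k N χ t p
      = χ ((p : ℕ) : ZMod N)
        * ((legendreSym p ((-1) ^ ((k - 1) / 2) * (t : ℤ)) : ℤ) : ℂ) := by
  by_cases hodd : Odd p
  · rw [psi, if_pos hodd, jacobiSym.legendreSym.to_jacobiSym]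
  · have h2 : p = 2 := by
      rcases hp.out.eq_two_or_odd' with h | h
      · exact h
      · exact absurd h hodd
    subst h2
    rw [psi, if_neg hodd, chi_two_eq_zero hN4, zero_mul]

lemma not_sq_dvd {p t w : ℕ} (hp : p.Prime) (ht : Squarefree t) (hw : ¬ p ∣ w) :
    ¬ p ^ 2 ∣ t * w ^ 2 := by
  intro h
  have hpw2 : ¬ p ∣ w ^ 2 := fun hd => hw (hp.dvd_of_dvd_pow hd)
  have hpt : p ∣ t := by
    have h1 : p ∣ t * w ^ 2 := dvd_trans (dvd_pow_self p two_ne_zero) h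
    exact (Nat.Coprime.dvd_of_dvd_mul_right
      ((Nat.Prime.coprime_iff_not_dvd hp).mpr hpw2) h1)
  obtain ⟨t', rfl⟩ := hpt
  have h3 : p ∣ t' * w ^ 2 := by
    have h' : p * p ∣ p * (t' * w ^ 2) := by
      rw [← pow_two, show p * (t' * w ^ 2) = p * t' * w ^ 2 from by ring]
      exact h
    exact (mul_dvd_mul_iff_left hp.pos.ne').mp h'
  have hpt' : p ∣ t' := Nat.Coprime.dvd_of_dvd_mul_right
      ((Nat.Prime.coprime_iff_not_dvd hp).mpr hpw2) h3
  exact hp.not_isUnit (ht p (mul_dvd_mul_left p hpt'))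

lemma divPow_helper {p : ℕ} (hp : 0 < p) {m c : ℕ} (hc : c ∣ m) (hm : m ≠ 0) {j i : ℕ}
    (hij : i ≤ j) : (p ^ j * m) / (p ^ i * c) = p ^ (j - i) * (m / c) := by
  obtain ⟨w, rfl⟩ := hc
  have hc0 : c ≠ 0 := by rintro rfl; exact hm (zero_mul w)
  have h1 : p ^ j * (c * w) = (p ^ i * c) * (p ^ (j - i) * w) := by
    rw [mul_mul_mul_comm, ← pow_add, Nat.add_sub_cancel' hij]
  rw [h1, Nat.mul_div_cancel_left _ (Nat.mul_pos (pow_pos hp i) (Nat.pos_of_ne_zero hc0)),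
    Nat.mul_div_cancel_left _ (Nat.pos_of_ne_zero hc0)]

lemma Uop_term (k N : ℕ) (χ : DirichletCharacter ℂ N) (hN4 : 4 ∣ N)
    (t : ℕ) (ht : Squarefree t) (p : ℕ) [hp : Fact p.Prime] (a : ℕ → ℂ)
    (e i : ℕ) (hi : i ≤ e) (w : ℕ) (hw : ¬ p ∣ w) :
    Uop k N χ p a (t * (p ^ (e - i) * w) ^ 2)
      = a (t * (p ^ (e + 1 - i) * w) ^ 2)
        + (if i = e then
            χ ((p : ℕ) : ZMod N) * ((legendreSym p ((-1) ^ ((k - 1) / 2) * (t : ℤ)) : ℤ) : ℂ)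
              * (p : ℂ) ^ ((k - 1) / 2 - 1) * a (t * w ^ 2)
          else 0)
        + (if i < e then
            χ ((p : ℕ) : ZMod N) ^ 2 * (p : ℂ) ^ (k - 2) * a (t * (p ^ (e - 1 - i) * w) ^ 2)
          else 0) := by
  rcases eq_or_lt_of_le hi with hie | hlt
  · rw [if_pos hie, if_neg (by omega), show e - i = 0 from by omega,
      show e + 1 - i = 1 from by omega, pow_zero, one_mul, pow_one]
    simp only [Uop]
    have h1 : p ^ 2 * (t * w ^ 2) = t * (p * w) ^ 2 := by ring
    have h2 : ¬ p ^ 2 ∣ t * w ^ 2 := not_sq_dvd hp.out ht hw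
    have h3 : ((-1 : ℤ) ^ ((k - 1) / 2) * ((t * w ^ 2 : ℕ) : ℤ))
        = ((-1) ^ ((k - 1) / 2) * (t : ℤ)) * (w : ℤ) ^ 2 := by push_cast; ring
    have hw' : (((w : ℤ) : ZMod p)) ≠ 0 := by
      rw [Int.cast_natCast]
      intro h0
      exact hw ((ZMod.natCast_eq_zero_iff w p).mp h0)
    rw [h1, if_neg h2, h3, legendreSym.mul, legendreSym.sq_one' p hw']
    push_cast
    ring
  · rw [if_neg (by omega), if_pos hlt]
    have hs1 : e - i = (e - 1 - i) + 1 := by omega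
    have hs2 : e + 1 - i = (e - 1 - i) + 2 := by omega
    set s := e - 1 - i with hs
    rw [hs1, hs2]
    simp only [Uop]
    have h1 : p ^ 2 * (t * (p ^ (s + 1) * w) ^ 2) = t * (p ^ (s + 2) * w) ^ 2 := by ring
    have h2 : p ^ 2 ∣ t * (p ^ (s + 1) * w) ^ 2 := ⟨t * (p ^ s * w) ^ 2, by ring⟩
    have h3 : t * (p ^ (s + 1) * w) ^ 2 / p ^ 2 = t * (p ^ s * w) ^ 2 := by
      rw [show t * (p ^ (s + 1) * w) ^ 2 = p ^ 2 * (t * (p ^ s * w) ^ 2) from by ring,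
        Nat.mul_div_cancel_left _ (pow_pos hp.out.pos 2)]
    have h4 : legendreSym p ((-1) ^ ((k - 1) / 2) * ((t * (p ^ (s + 1) * w) ^ 2 : ℕ) : ℤ)) = 0 := by
      rw [legendreSym.eq_zero_iff]
      push_cast
      rw [ZMod.natCast_self]
      ring
    rw [h1, if_pos h2, h3, h4]
    push_cast
    ring

lemma sum_ite_zero' {ι M : Type*} [AddCommMonoid M] (s : Finset ι) (P : Prop) [Decidable P]
    (f : ι → M) : (∑ x ∈ s, if P then f x else 0) = if P then ∑ x ∈ s, f x else 0 := by
  split_ifs <;> simp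

lemma sum_if_eq {M : Type*} [AddCommMonoid M] (e : ℕ) (X : M) :
    (∑ i ∈ range (e + 1), if i = e then X else 0) = X := by
  rw [Finset.sum_ite_eq' (range (e + 1)) e (fun _ => X), if_pos (Finset.self_mem_range_succ e)]

lemma sum_if_lt {M : Type*} [AddCommMonoid M] (e : ℕ) (G : ℕ → M) :
    (∑ i ∈ range (e + 1), if i < e then G i else 0) = ∑ i ∈ range e, G i := by
  rw [Finset.sum_range_succ, if_neg (lt_irrefl e), add_zero]
  exact Finset.sum_congr rfl fun i hi => if_pos (mem_range.mp hi)

/-- the Shimura lift intertwines U_p with W_p, for every prime p. -/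
theorem shimura_lift_commutes_with_Tp2
    (k N : ℕ) (hk3 : 3 ≤ k) (hk : Odd k) (hN : 0 < N) (hN4 : 4 ∣ N)
    (χ : DirichletCharacter ℂ N) (a : ℕ → ℂ)
    (t : ℕ) (ht0 : 0 < t) (ht : Squarefree t)
    (p : ℕ) [Fact p.Prime] (n : ℕ) (hn : 0 < n) :
    ShLift k N χ t (Uop k N χ p a) n = Wop k N χ p (ShLift k N χ t a) n := by
  have hp : p.Prime := Fact.out
  obtain ⟨e, m, hpm, hm0, rfl⟩ : ∃ e m, ¬ p ∣ m ∧ m ≠ 0 ∧ n = p ^ e * m := by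
    refine ⟨n.factorization p, n / p ^ n.factorization p, Nat.not_dvd_ordCompl hp hn.ne', ?_, ?_⟩
    · exact (Nat.ordCompl_pos p hn.ne').ne'
    · exact (Nat.ordProj_mul_ordCompl_eq_self n p).symm
  have hdiv : ∀ (j i c : ℕ), i ≤ j → c ∣ m → (p ^ j * m) / (p ^ i * c) = p ^ (j - i) * (m / c) :=
    fun j i c hij hc => divPow_helper hp.pos hc hm0 hij
  have hwnd : ∀ c : ℕ, c ∣ m → ¬ p ∣ m / c :=
    fun c hc h => hpm (h.trans (Nat.div_dvd_of_dvd hc))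
  have hLHS : ShLift k N χ t (Uop k N χ p a) (p ^ e * m)
      = ((∑ i ∈ range (e + 1), ∑ c ∈ m.divisors,
          psi k N χ t (p ^ i * c) * ((p ^ i * c : ℕ) : ℂ) ^ ((k - 1) / 2 - 1)
            * a (t * (p ^ (e + 1 - i) * (m / c)) ^ 2))
        + ∑ c ∈ m.divisors,
            psi k N χ t (p ^ e * c) * ((p ^ e * c : ℕ) : ℂ) ^ ((k - 1) / 2 - 1)
              * (χ ((p : ℕ) : ZMod N)
                  * ((legendreSym p ((-1) ^ ((k - 1) / 2) * (t : ℤ)) : ℤ) : ℂ)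
                  * (p : ℂ) ^ ((k - 1) / 2 - 1) * a (t * (m / c) ^ 2)))
        + ∑ i ∈ range e, ∑ c ∈ m.divisors,
            χ ((p : ℕ) : ZMod N) ^ 2 * (p : ℂ) ^ (k - 2)
              * (psi k N χ t (p ^ i * c) * ((p ^ i * c : ℕ) : ℂ) ^ ((k - 1) / 2 - 1)
                  * a (t * (p ^ (e - 1 - i) * (m / c)) ^ 2)) := by
    simp only [ShLift]
    rw [sum_divisors_primePow_mul hp hm0 hpm e]
    have hterm : ∀ i ∈ range (e + 1), ∀ c ∈ m.divisors,
        psi k N χ t (p ^ i * c) * ((p ^ i * c : ℕ) : ℂ) ^ ((k - 1) / 2 - 1)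
            * Uop k N χ p a (t * ((p ^ e * m) / (p ^ i * c)) ^ 2)
          = psi k N χ t (p ^ i * c) * ((p ^ i * c : ℕ) : ℂ) ^ ((k - 1) / 2 - 1)
              * a (t * (p ^ (e + 1 - i) * (m / c)) ^ 2)
            + (if i = e then
                psi k N χ t (p ^ e * c) * ((p ^ e * c : ℕ) : ℂ) ^ ((k - 1) / 2 - 1)
                  * (χ ((p : ℕ) : ZMod N)
                      * ((legendreSym p ((-1) ^ ((k - 1) / 2) * (t : ℤ)) : ℤ) : ℂ)
                      * (p : ℂ) ^ ((k - 1) / 2 - 1) * a (t * (m / c) ^ 2))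
              else 0)
            + (if i < e then
                χ ((p : ℕ) : ZMod N) ^ 2 * (p : ℂ) ^ (k - 2)
                  * (psi k N χ t (p ^ i * c) * ((p ^ i * c : ℕ) : ℂ) ^ ((k - 1) / 2 - 1)
                      * a (t * (p ^ (e - 1 - i) * (m / c)) ^ 2))
              else 0) := by
      intro i hi c hc
      rw [mem_range] at hi
      rw [Nat.mem_divisors] at hc
      rw [hdiv e i c (by omega) hc.1,
        Uop_term k N χ hN4 t ht p a e i (by omega) (m / c) (hwnd c hc.1)]
      split_ifs with h1 h2
      · exact absurd (h1 ▸ h2) (lt_irrefl _)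
      · subst h1; ring
      · ring
      · ring
    rw [Finset.sum_congr rfl fun i hi => Finset.sum_congr rfl fun c hc => hterm i hi c hc]
    simp only [Finset.sum_add_distrib]
    rw [Finset.sum_congr rfl fun i (_ : i ∈ range (e + 1)) =>
        sum_ite_zero' m.divisors (i = e)
          (fun c => psi k N χ t (p ^ e * c) * ((p ^ e * c : ℕ) : ℂ) ^ ((k - 1) / 2 - 1)
            * (χ ((p : ℕ) : ZMod N)
                * ((legendreSym p ((-1) ^ ((k - 1) / 2) * (t : ℤ)) : ℤ) : ℂ)
                * (p : ℂ) ^ ((k - 1) / 2 - 1) * a (t * (m / c) ^ 2)))]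
    rw [Finset.sum_congr rfl fun i (_ : i ∈ range (e + 1)) =>
        sum_ite_zero' m.divisors (i < e)
          (fun c => χ ((p : ℕ) : ZMod N) ^ 2 * (p : ℂ) ^ (k - 2)
            * (psi k N χ t (p ^ i * c) * ((p ^ i * c : ℕ) : ℂ) ^ ((k - 1) / 2 - 1)
                * a (t * (p ^ (e - 1 - i) * (m / c)) ^ 2)))]
    rw [sum_if_eq, sum_if_lt]
  have hRHS : Wop k N χ p (ShLift k N χ t a) (p ^ e * m)
      = ((∑ i ∈ range (e + 1), ∑ c ∈ m.divisors,
          psi k N χ t (p ^ i * c) * ((p ^ i * c : ℕ) : ℂ) ^ ((k - 1) / 2 - 1)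
            * a (t * (p ^ (e + 1 - i) * (m / c)) ^ 2))
        + ∑ c ∈ m.divisors,
            psi k N χ t (p ^ e * c) * ((p ^ e * c : ℕ) : ℂ) ^ ((k - 1) / 2 - 1)
              * (χ ((p : ℕ) : ZMod N)
                  * ((legendreSym p ((-1) ^ ((k - 1) / 2) * (t : ℤ)) : ℤ) : ℂ)
                  * (p : ℂ) ^ ((k - 1) / 2 - 1) * a (t * (m / c) ^ 2)))
        + ∑ i ∈ range e, ∑ c ∈ m.divisors,
            χ ((p : ℕ) : ZMod N) ^ 2 * (p : ℂ) ^ (k - 2)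
              * (psi k N χ t (p ^ i * c) * ((p ^ i * c : ℕ) : ℂ) ^ ((k - 1) / 2 - 1)
                  * a (t * (p ^ (e - 1 - i) * (m / c)) ^ 2)) := by
    simp only [Wop]
    have hA : ShLift k N χ t a (p * (p ^ e * m))
        = (∑ i ∈ range (e + 1), ∑ c ∈ m.divisors,
            psi k N χ t (p ^ i * c) * ((p ^ i * c : ℕ) : ℂ) ^ ((k - 1) / 2 - 1)
              * a (t * (p ^ (e + 1 - i) * (m / c)) ^ 2))
          + ∑ c ∈ m.divisors,
              psi k N χ t (p ^ e * c) * ((p ^ e * c : ℕ) : ℂ) ^ ((k - 1) / 2 - 1)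
                * (χ ((p : ℕ) : ZMod N)
                    * ((legendreSym p ((-1) ^ ((k - 1) / 2) * (t : ℤ)) : ℤ) : ℂ)
                    * (p : ℂ) ^ ((k - 1) / 2 - 1) * a (t * (m / c) ^ 2)) := by
      rw [show p * (p ^ e * m) = p ^ (e + 1) * m from by ring]
      simp only [ShLift]
      rw [sum_divisors_primePow_mul hp hm0 hpm (e + 1)]
      have hterm2 : ∀ i ∈ range (e + 1 + 1), ∀ c ∈ m.divisors,
          psi k N χ t (p ^ i * c) * ((p ^ i * c : ℕ) : ℂ) ^ ((k - 1) / 2 - 1)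
              * a (t * ((p ^ (e + 1) * m) / (p ^ i * c)) ^ 2)
            = psi k N χ t (p ^ i * c) * ((p ^ i * c : ℕ) : ℂ) ^ ((k - 1) / 2 - 1)
              * a (t * (p ^ (e + 1 - i) * (m / c)) ^ 2) := by
        intro i hi c hc
        rw [mem_range] at hi
        rw [Nat.mem_divisors] at hc
        rw [hdiv (e + 1) i c (by omega) hc.1]
      rw [Finset.sum_congr rfl fun i hi => Finset.sum_congr rfl fun c hc => hterm2 i hi c hc]
      rw [Finset.sum_range_succ]
      congr 1
      refine Finset.sum_congr rfl fun c hc => ?_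
      have hcast : ((p ^ (e + 1) * c : ℕ) : ℂ) ^ ((k - 1) / 2 - 1)
          = (p : ℂ) ^ ((k - 1) / 2 - 1) * ((p ^ e * c : ℕ) : ℂ) ^ ((k - 1) / 2 - 1) := by
        have h0 : ((p ^ (e + 1) * c : ℕ) : ℂ) = (p : ℂ) * ((p ^ e * c : ℕ) : ℂ) := by
          push_cast; ring
        rw [h0, mul_pow]
      rw [show e + 1 - (e + 1) = 0 from by omega, pow_zero, one_mul, hcast,
        show p ^ (e + 1) * c = p * (p ^ e * c) from by ring,
        psi_mul k N χ t p (p ^ e * c), psi_prime_eq k N χ t hN4 p]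
      ring
    rw [hA]
    congr 1
    cases e with
    | zero =>
      rw [if_neg (by simpa using hpm), mul_zero, Finset.range_zero, Finset.sum_empty]
    | succ e' =>
      rw [if_pos ⟨p ^ e' * m, by ring⟩,
        show p ^ (e' + 1) * m / p = p ^ e' * m from by
          rw [show p ^ (e' + 1) * m = p * (p ^ e' * m) from by ring,
            Nat.mul_div_cancel_left _ hp.pos]]
      simp only [ShLift]
      rw [sum_divisors_primePow_mul hp hm0 hpm e']
      rw [Finset.mul_sum]
      refine Finset.sum_congr rfl fun i hi => ?_
      rw [Finset.mul_sum]
      refine Finset.sum_congr rfl fun c hc => ?_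
      rw [mem_range] at hi
      rw [Nat.mem_divisors] at hc
      rw [hdiv e' i c (by omega) hc.1, show e' + 1 - 1 - i = e' - i from by omega]
  rw [hLHS, hRHS]
end

section
/- Let p be an odd prime, α a positive integer, and n a positive integer of the form n = p^{α−1}·n′ for a positive integer n′. Then ∑_{m=0}^{p^α − 1} (m ∣ p)·exp(2πi·m·n/p^α) = p^{α−1}·(n′ ∣ p)·ε_p·√p, where ε_p = 1 if p ≡ 1 (mod 4) and ε_p = i if p ≡ 3 (mod 4). -/
open Finset

open Complex Filter Topology
open scoped Real

noncomputable section

private lemma jt2_add_left_nat (z τ : ℂ) (n : ℕ) : jacobiTheta₂ (z + n) τ = jacobiTheta₂ z τ := by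
  induction n with
  | zero => simp
  | succ k ih => push_cast
                 rw [show z + ((k : ℂ) + 1) = (z + k) + 1 by ring, jacobiTheta₂_add_left]
                 push_cast at ih; exact ih

private lemma jt2_add_left_int (z τ : ℂ) (n : ℤ) : jacobiTheta₂ (z + n) τ = jacobiTheta₂ z τ := by
  rcases le_or_gt 0 n with h | h
  · lift n to ℕ using h; push_cast; exact_mod_cast jt2_add_left_nat z τ n
  · obtain ⟨m, rfl⟩ : ∃ m : ℕ, n = -(m:ℤ) := ⟨n.natAbs, by omega⟩
    have := jt2_add_left_nat (z - m) τ m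
    rw [sub_add_cancel] at this
    push_cast
    rw [show z + -(m:ℂ) = z - m by ring, ← this]

private lemma jt2_add_right_nat (z τ : ℂ) (n : ℕ) : jacobiTheta₂ z (τ + 2*n) = jacobiTheta₂ z τ := by
  induction n with
  | zero => simp
  | succ k ih => push_cast
                 rw [show τ + 2*((k : ℂ) + 1) = (τ + 2*k) + 2 by ring, jacobiTheta₂_add_right]
                 push_cast at ih; exact ih

private lemma jt2_add_right_int (z τ : ℂ) (n : ℤ) : jacobiTheta₂ z (τ + 2*n) = jacobiTheta₂ z τ := by
  rcases le_or_gt 0 n with h | h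
  · lift n to ℕ using h; push_cast; exact_mod_cast jt2_add_right_nat z τ n
  · obtain ⟨m, rfl⟩ : ∃ m : ℕ, n = -(m:ℤ) := ⟨n.natAbs, by omega⟩
    have := jt2_add_right_nat z (τ - 2*m) m
    rw [sub_add_cancel] at this
    push_cast
    rw [show τ + 2*(-(m:ℂ)) = τ - 2*m by ring, ← this]

private lemma jt2_term_split (k : ℕ) (r : ℕ) (m : ℤ) (z τ : ℂ) :
    jacobiTheta₂_term (k * m + r) z τ
      = Complex.exp (2*π*I*r*z + π*I*r^2*τ) * jacobiTheta₂_term m ((k:ℂ)*z + k*r*τ) ((k:ℂ)^2*τ) := by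
  rw [jacobiTheta₂_term, jacobiTheta₂_term, ← Complex.exp_add]
  congr 1
  push_cast
  ring

private def resEquiv (k : ℕ) (hk : 0 < k) : Fin k × ℤ ≃ ℤ where
  toFun := fun rm => k * rm.2 + rm.1
  invFun := fun n => (⟨(n % k).toNat, by
      have h0 : (0:ℤ) < k := by exact_mod_cast hk
      have := Int.emod_nonneg n h0.ne'
      have h2 := Int.emod_lt_of_pos n h0
      omega⟩, n / k)
  left_inv := by
    rintro ⟨r, m⟩
    have h0 : (0:ℤ) < k := by exact_mod_cast hk
    have hrk : (r:ℤ) < k := by exact_mod_cast r.2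
    have hr0 : (0:ℤ) ≤ r := Int.ofNat_nonneg r
    have hmod : ((k:ℤ) * m + r) % k = r := by
      rw [add_comm, Int.add_mul_emod_self_left, Int.emod_eq_of_lt hr0 hrk]
    have hdiv : ((k:ℤ) * m + r) / k = m := by
      rw [add_comm, mul_comm, Int.add_mul_ediv_right _ _ h0.ne',
        Int.ediv_eq_zero_of_lt hr0 hrk, zero_add]
    ext
    · simp [hmod]
    · simp [hdiv]
  right_inv := fun n => by
    have h0 : (0:ℤ) < k := by exact_mod_cast hk
    simp only
    rw [Int.toNat_of_nonneg (Int.emod_nonneg n h0.ne')]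
    exact Int.mul_ediv_add_emod n k

/-- Splitting the theta series according to residues mod `k`. -/
private lemma jt2_split (k : ℕ) (hk : 0 < k) (z τ : ℂ) (hτ : 0 < τ.im) :
    jacobiTheta₂ z τ = ∑ r ∈ range k,
      Complex.exp (2*π*I*r*z + π*I*r^2*τ) * jacobiTheta₂ ((k:ℂ)*z + k*r*τ) ((k:ℂ)^2*τ) := by
  have hτ' : 0 < ((k:ℂ)^2*τ).im := by
    have h : ((k:ℂ)^2*τ) = ((k^2:ℕ):ℂ)*τ := by push_cast; ring
    rw [h]
    simp only [Complex.mul_im, Complex.natCast_re, Complex.natCast_im, zero_mul, add_zero]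
    positivity
  have H : HasSum (fun n : ℤ => jacobiTheta₂_term n z τ) (jacobiTheta₂ z τ) :=
    hasSum_jacobiTheta₂_term z hτ
  have H2 : HasSum ((fun n : ℤ => jacobiTheta₂_term n z τ) ∘ (resEquiv k hk))
      (jacobiTheta₂ z τ) := (Equiv.hasSum_iff (resEquiv k hk)).mpr H
  have fib : ∀ r : Fin k, HasSum (fun m : ℤ =>
      ((fun n : ℤ => jacobiTheta₂_term n z τ) ∘ (resEquiv k hk)) (r, m))
      (Complex.exp (2*π*I*r*z + π*I*r^2*τ) * jacobiTheta₂ ((k:ℂ)*z + k*r*τ) ((k:ℂ)^2*τ)) := by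
    intro r
    have : ∀ m : ℤ, ((fun n : ℤ => jacobiTheta₂_term n z τ) ∘ (resEquiv k hk)) (r, m)
        = Complex.exp (2*π*I*r*z + π*I*r^2*τ) *
          jacobiTheta₂_term m ((k:ℂ)*z + k*r*τ) ((k:ℂ)^2*τ) := by
      intro m
      simp only [Function.comp, resEquiv, Equiv.coe_fn_mk]
      exact jt2_term_split k r m z τ
    rw [funext this]
    exact (hasSum_jacobiTheta₂_term _ hτ').mul_left _
  have hfin := H2.prod_fiberwise fib
  have heq := (hasSum_fintype (fun r : Fin k =>
      Complex.exp (2*π*I*r*z + π*I*r^2*τ) * jacobiTheta₂ ((k:ℂ)*z + k*r*τ) ((k:ℂ)^2*τ))).unique hfin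
  rw [← Fin.sum_univ_eq_sum_range (fun j : ℕ =>
      Complex.exp (2*π*I*j*z + π*I*j^2*τ) * jacobiTheta₂ ((k:ℂ)*z + k*j*τ) ((k:ℂ)^2*τ)) k]
  exact heq.symm

/-- The two-variable theta tends to 1 as the imaginary part goes to infinity along a
vertical line. -/
private lemma jt2_tendsto_one (z : ℂ) (x : ℝ) :
    Tendsto (fun y : ℝ => jacobiTheta₂ z (x + I*y)) atTop (𝓝 1) := by
  have h1 : (1:ℂ) = ∑' n : ℤ, (if n = (0:ℤ) then (1:ℂ) else 0) := (tsum_ite_eq (0:ℤ) (fun _ => (1:ℂ))).symm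
  rw [h1]
  have him : ∀ y : ℝ, ((x:ℂ) + I*y).im = y := by intro y; simp
  set Y : ℝ := 2*|z.im| + 1 with hY
  have hY0 : 0 < Y := by positivity
  have hsum : Summable (fun n : ℤ => ‖jacobiTheta₂_term n z ((x:ℂ) + I*Y)‖) :=
    summable_norm_iff.mpr <| (summable_jacobiTheta₂_term_iff z _).mpr (by rw [him]; exact hY0)
  unfold jacobiTheta₂
  apply tendsto_tsum_of_dominated_convergence hsum
  · intro n
    rcases eq_or_ne n 0 with h | h
    · subst h
      simp only [if_pos rfl]
      have : ∀ y : ℝ, jacobiTheta₂_term 0 z ((x:ℂ) + I*y) = 1 := by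
        intro y; rw [jacobiTheta₂_term]; norm_num
      simp_rw [this]
      exact tendsto_const_nhds
    · simp only [if_neg h]
      rw [tendsto_zero_iff_norm_tendsto_zero]
      have hnorm : ∀ y : ℝ, ‖jacobiTheta₂_term n z ((x:ℂ) + I*y)‖
          = Real.exp (-π * n^2 * y - 2*π*n*z.im) := by
        intro y; rw [norm_jacobiTheta₂_term, him]
      simp_rw [hnorm]
      have : Tendsto (fun y : ℝ => -π * n^2 * y - 2*π*n*z.im) atTop atBot := by
        simp_rw [sub_eq_add_neg]
        apply tendsto_atBot_add_const_right
        apply Tendsto.const_mul_atTop_of_neg _ tendsto_id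
        have hn : ((n:ℝ))^2 > 0 := by
          have : (n:ℝ) ≠ 0 := Int.cast_ne_zero.mpr h
          positivity
        nlinarith [Real.pi_pos]
      exact Real.tendsto_exp_atBot.comp this
  · filter_upwards [eventually_ge_atTop Y] with y hy
    intro n
    rw [norm_jacobiTheta₂_term, norm_jacobiTheta₂_term, him, him]
    apply Real.exp_le_exp.mpr
    have key : 0 ≤ π * (n:ℝ)^2 * (y - Y) :=
      mul_nonneg (mul_nonneg Real.pi_pos.le (by positivity)) (by linarith)
    nlinarith [key]

private lemma sqrt_half_cpow {b : ℝ} (hb : 0 < b) : ((b:ℂ)) ^ (1/2 : ℂ) = (Real.sqrt b : ℂ) := by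
  rw [show ((1/2 : ℂ)) = ((1/2 : ℝ) : ℂ) by norm_num, ← Complex.ofReal_cpow hb.le,
    Real.sqrt_eq_rpow]

private lemma fe_vertical (a b : ℝ) (hb : 0 < b) :
    jacobiTheta₂ (I*a) (I*b) = (Real.sqrt b : ℂ)⁻¹ * Complex.exp ((π*a^2/b : ℝ)) *
      jacobiTheta₂ ((a/b : ℝ)) (I*((1/b : ℝ):ℂ)) := by
  have hb0 : (b:ℂ) ≠ 0 := by exact_mod_cast hb.ne'
  have h := jacobiTheta₂_functional_equation (I*a) (I*b)
  rw [show -I * (I*(b:ℂ)) = (b:ℂ) by rw [← mul_assoc]; simp, sqrt_half_cpow hb] at h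
  rw [show -(π:ℂ) * I * (I*a)^2 / (I*b) = ((π*a^2/b : ℝ):ℂ) by
      push_cast; rw [mul_pow, Complex.I_sq]; field_simp] at h
  rw [show (I*(a:ℂ))/(I*b) = ((a/b : ℝ):ℂ) by push_cast; field_simp] at h
  rw [show (-1 : ℂ)/(I*b) = I*((1/b : ℝ):ℂ) by
      push_cast; field_simp; rw [Complex.I_sq]] at h
  rw [h, one_div]

private lemma tendsto_inv_sq_mul (p : ℕ) (hp : 0 < p) :
    Tendsto (fun t : ℝ => 1/((p:ℝ)^2*t)) (𝓝[>] (0:ℝ)) atTop := by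
  have h1 : Tendsto (fun t : ℝ => (p:ℝ)^2*t) (𝓝[>] (0:ℝ)) (𝓝[>] (0:ℝ)) := by
    apply tendsto_nhdsWithin_iff.mpr
    constructor
    · have : Tendsto (fun t : ℝ => (p:ℝ)^2*t) (𝓝 (0:ℝ)) (𝓝 ((p:ℝ)^2*0)) :=
        (continuous_const.mul continuous_id).tendsto 0
      rw [mul_zero] at this
      exact this.mono_left nhdsWithin_le_nhds
    · filter_upwards [self_mem_nhdsWithin] with t ht
      have hp' : (0:ℝ) < (p:ℝ)^2 := by positivity
      exact mul_pos hp' ht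
  simpa only [one_div, Function.comp_def] using tendsto_inv_nhdsGT_zero.comp h1

private lemma claimA (p : ℕ) (hp : 0 < p) :
    Tendsto (fun t : ℝ => (Real.sqrt t : ℂ) * jacobiTheta₂ 0 (2/(p:ℂ) + I*t)) (𝓝[>] (0:ℝ))
      (𝓝 ((∑ r ∈ range p, Complex.exp (2*π*I*r^2/p)) / p)) := by
  have hpR : (0:ℝ) < p := by exact_mod_cast hp
  have hpC : (p:ℂ) ≠ 0 := by exact_mod_cast hp.ne'
  -- the comparison function
  set g : ℕ → ℝ → ℂ := fun r t =>
    Complex.exp (π*I*r^2*(2/(p:ℂ) + I*t)) * Complex.exp ((π*(r^2*t) : ℝ)) *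
      jacobiTheta₂ (((r/p : ℝ)):ℂ) (((0:ℝ):ℂ) + I*((1/((p:ℝ)^2*t) : ℝ):ℂ)) / p with hg
  have heq : ∀ᶠ t in 𝓝[>] (0:ℝ),
      (Real.sqrt t : ℂ) * jacobiTheta₂ 0 (2/(p:ℂ) + I*t) = ∑ r ∈ range p, g r t := by
    filter_upwards [self_mem_nhdsWithin] with t ht
    have ht : (0:ℝ) < t := ht
    have htC : (t:ℂ) ≠ 0 := by exact_mod_cast ht.ne'
    have hτ : (0:ℝ) < ((2/(p:ℂ) + I*t)).im := by
      simp [Complex.add_im, Complex.div_im, Complex.mul_im]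
      exact ht
    rw [jt2_split p hp 0 _ hτ, Finset.mul_sum]
    refine Finset.sum_congr rfl (fun r hr => ?_)
    have e2 : (p:ℂ)*0 + (p:ℂ)*r*(2/(p:ℂ) + I*t) = I*((p*r*t : ℝ):ℂ) + ((2*r : ℤ):ℂ) := by
      push_cast; field_simp; ring
    have e3 : (p:ℂ)^2*(2/(p:ℂ) + I*t) = I*(((p:ℝ)^2*t : ℝ):ℂ) + 2*((p:ℤ):ℂ) := by
      push_cast; field_simp; ring
    rw [e2, e3, jt2_add_left_int, jt2_add_right_int,
      fe_vertical _ _ (by positivity : (0:ℝ) < (p:ℝ)^2*t)]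
    have e4 : (p*r*t) / ((p:ℝ)^2*t) = r/p := by field_simp
    have e5 : (π*(p*r*t)^2/((p:ℝ)^2*t) : ℝ) = (π*(r^2*t) : ℝ) := by field_simp
    have e6 : Real.sqrt ((p:ℝ)^2*t) = p * Real.sqrt t := by
      rw [Real.sqrt_mul (by positivity), Real.sqrt_sq hpR.le]
    have e7 : (((0:ℝ):ℂ) + I*((1/((p:ℝ)^2*t) : ℝ):ℂ)) = I*((1/((p:ℝ)^2*t) : ℝ):ℂ) := by
      simp
    rw [e4, e5, e6, hg]
    simp only [Complex.ofReal_zero, zero_add]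
    have hst : ((Real.sqrt t : ℝ):ℂ) ≠ 0 := by
      exact_mod_cast (Real.sqrt_pos.mpr ht).ne'
    have : (2*(π:ℂ)*I*r*0 + π*I*r^2*(2/(p:ℂ) + I*t)) = π*I*r^2*(2/(p:ℂ) + I*t) := by ring
    rw [this]
    push_cast
    field_simp
  have hlim : ∀ r ∈ range p, Tendsto (g r) (𝓝[>] (0:ℝ))
      (𝓝 (Complex.exp (2*π*I*r^2/p) / p)) := by
    intro r _
    have l1 : Tendsto (fun t : ℝ => Complex.exp (π*I*r^2*(2/(p:ℂ) + I*t))) (𝓝[>] (0:ℝ))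
        (𝓝 (Complex.exp (2*π*I*r^2/p))) := by
      have hc : Continuous (fun t : ℝ => Complex.exp (π*I*r^2*(2/(p:ℂ) + I*t))) := by
        continuity
      have := (hc.tendsto 0).mono_left (nhdsWithin_le_nhds (s := Set.Ioi (0:ℝ)))
      convert this using 2
      push_cast
      ring_nf
    have l2 : Tendsto (fun t : ℝ => Complex.exp ((π*(r^2*t) : ℝ) : ℂ)) (𝓝[>] (0:ℝ)) (𝓝 1) := by
      have hc : Continuous (fun t : ℝ => Complex.exp ((π*(r^2*t) : ℝ) : ℂ)) := by continuity
      have := (hc.tendsto 0).mono_left (nhdsWithin_le_nhds (s := Set.Ioi (0:ℝ)))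
      simpa using this
    have l3 : Tendsto (fun t : ℝ => jacobiTheta₂ (((r/p : ℝ)):ℂ)
        (((0:ℝ):ℂ) + I*((1/((p:ℝ)^2*t) : ℝ):ℂ))) (𝓝[>] (0:ℝ)) (𝓝 1) :=
      (jt2_tendsto_one (((r/p : ℝ)):ℂ) 0).comp (tendsto_inv_sq_mul p hp)
    have h := ((l1.mul l2).mul l3).div_const (p:ℂ)
    rw [mul_one, mul_one] at h
    refine h.congr fun t => ?_
    rw [hg]
  have := tendsto_finset_sum (range p) hlim
  rw [← Finset.sum_div] at this
  exact this.congr' (heq.mono fun t ht => ht.symm)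

private lemma cpow_half_mul {z w : ℂ} (hzre : 0 < z.re) (hzim : z.im < 0)
    (hwre : 0 < w.re) (hwim : w.im < 0) :
    (z*w) ^ (1/2 : ℂ) = z ^ (1/2 : ℂ) * w ^ (1/2 : ℂ) := by
  have hz : z ≠ 0 := by intro h; rw [h] at hzre; simp at hzre
  have hw : w ≠ 0 := by intro h; rw [h] at hwre; simp at hwre
  have haz : -(π/2) < z.arg ∧ z.arg < 0 :=
    ⟨Complex.neg_pi_div_two_lt_arg_iff.mpr (Or.inl hzre), Complex.arg_neg_iff.mpr hzim⟩
  have haw : -(π/2) < w.arg ∧ w.arg < 0 :=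
    ⟨Complex.neg_pi_div_two_lt_arg_iff.mpr (Or.inl hwre), Complex.arg_neg_iff.mpr hwim⟩
  have harg : z.arg + w.arg ∈ Set.Ioc (-π) π := by
    constructor
    · linarith [haz.1, haw.1]
    · have := Real.pi_pos; linarith [haz.2, haw.2]
  rw [Complex.cpow_def_of_ne_zero (mul_ne_zero hz hw), Complex.cpow_def_of_ne_zero hz,
    Complex.cpow_def_of_ne_zero hw, Complex.log_mul hz hw harg, ← Complex.exp_add]
  congr 1
  ring

private lemma neg_I_mul_cpow_half {c : ℝ} (hc : 0 < c) :
    (((c:ℂ)) * (-I)) ^ (1/2 : ℂ) = (Real.sqrt c : ℂ) * Complex.exp (-(π:ℂ)*I/4) := by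
  have hc0 : (c:ℂ) ≠ 0 := by exact_mod_cast hc.ne'
  have hne : ((c:ℂ)) * (-I) ≠ 0 := mul_ne_zero hc0 (by simpa using I_ne_zero)
  have habs : ‖(c:ℂ) * (-I)‖ = c := by
    rw [norm_mul]; simp [abs_of_pos hc]
  have harg : ((c:ℂ) * (-I)).arg = -(π/2) := by
    rw [Complex.arg_real_mul _ hc, Complex.arg_neg_I]
  have hlog : Complex.log ((c:ℂ) * (-I)) = (Real.log c : ℂ) + (-(π/2) : ℝ) * I := by
    rw [Complex.log, habs, harg]
  rw [Complex.cpow_def_of_ne_zero hne, hlog,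
    show (((Real.log c : ℂ)) + ((-(π/2) : ℝ) : ℂ) * I) * (1/2)
      = ((Real.log c / 2 : ℝ) : ℂ) + (-(π:ℂ)*I/4) by push_cast; ring,
    Complex.exp_add, ← Complex.ofReal_exp]
  congr 2
  rw [Real.sqrt_eq_rpow, Real.rpow_def_of_pos hc]
  ring_nf

private lemma claimB (p : ℕ) (hp : 0 < p) :
    Tendsto (fun t : ℝ => (Real.sqrt t : ℂ) * jacobiTheta₂ 0 (2/(p:ℂ) + I*t)) (𝓝[>] (0:ℝ))
      (𝓝 (Complex.exp ((π:ℂ)*I/4) / (Real.sqrt (2*p) : ℂ) *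
        (1 + Complex.exp (-(π:ℂ)*I*p/2)))) := by
  have hpR : (0:ℝ) < p := by exact_mod_cast hp
  have hpC : (p:ℂ) ≠ 0 := by exact_mod_cast hp.ne'
  set ν : ℝ → ℂ := fun t => (((-1/(2*p) : ℝ)):ℂ) + I*(((1/((p:ℝ)^2*t)) : ℝ):ℂ) with hνdef
  have heq : ∀ᶠ t in 𝓝[>] (0:ℝ),
      (Real.sqrt t : ℂ) * jacobiTheta₂ 0 (2/(p:ℂ) + I*t)
        = Complex.exp ((π:ℂ)*I/4) / (Real.sqrt (2*p) : ℂ) *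
            (jacobiTheta₂ 0 (ν t) + Complex.exp (-(π:ℂ)*I*p/2) * jacobiTheta₂ (1/2) (ν t)) := by
    filter_upwards [self_mem_nhdsWithin] with t ht
    have ht : (0:ℝ) < t := ht
    have htC : (t:ℂ) ≠ 0 := by exact_mod_cast ht.ne'
    set τ : ℂ := 2/(p:ℂ) + I*t with hτdef
    clear_value τ
    have hτim : τ.im = t := by rw [hτdef]; simp
    have hτre : τ.re = 2/p := by rw [hτdef]; simp
    have hτ0 : τ ≠ 0 := by
      intro h
      rw [h] at hτim
      simp at hτim
      exact ht.ne' hτim.symm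
    set σ : ℂ := -1/τ with hσdef
    clear_value σ
    have hσim : 0 < σ.im := by
      rw [hσdef, neg_div, one_div, neg_im, Complex.inv_im, hτim]
      have : 0 < Complex.normSq τ := Complex.normSq_pos.mpr hτ0
      rw [neg_div, neg_neg]
      positivity
    set μ : ℂ := 2*(p:ℂ)*I*t/τ with hμdef
    clear_value μ
    have h2' : (2:ℂ) + (p:ℂ)*I*t ≠ 0 := by
      have : (2:ℂ) + (p:ℂ)*I*t = (p:ℂ) * τ := by rw [hτdef]; field_simp
      rw [this]
      exact mul_ne_zero hpC hτ0
    have hμσ : μ = 4*σ + 2*p := by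
      have hmul : μ * τ = (4*σ + 2*p) * τ := by
        rw [hμdef, hσdef]
        field_simp
        rw [hτdef]
        field_simp
        ring
      exact mul_right_cancel₀ hτ0 hmul
    have hμim : 0 < μ.im := by
      rw [hμσ]
      simp [Complex.add_im, Complex.mul_im, hσim]
    have hμ0 : μ ≠ 0 := fun h => by rw [h] at hμim; simp at hμim
    -- step i: functional equation at (0, τ)
    have step1 : jacobiTheta₂ 0 τ = 1/(-I*τ)^(1/2:ℂ) * jacobiTheta₂ 0 σ := by
      have h := jacobiTheta₂_functional_equation 0 τ
      rw [show -(π:ℂ)*I*0^2/τ = 0 by ring, Complex.exp_zero, zero_div] at h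
      rw [h, hσdef, mul_one]
    -- step ii: split at σ with k = 2
    have step2 : jacobiTheta₂ 0 σ
        = jacobiTheta₂ 0 ((2:ℂ)^2*σ) + Complex.exp (π*I*σ) * jacobiTheta₂ (2*σ) ((2:ℂ)^2*σ) := by
      have h := jt2_split 2 (by norm_num) 0 σ hσim
      rw [Finset.sum_range_succ, Finset.sum_range_one] at h
      push_cast at h
      rw [h]
      norm_num
    -- step iii/iv: shift to μ
    have h4σ : (2:ℂ)^2*σ = μ + 2*((-(p:ℤ) : ℤ):ℂ) := by
      push_cast; rw [hμσ]; ring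
    have h2σ : (2:ℂ)*σ = μ/2 + ((-(p:ℤ) : ℤ):ℂ) := by
      push_cast; rw [hμσ]; ring
    have step3 : jacobiTheta₂ 0 ((2:ℂ)^2*σ) = jacobiTheta₂ 0 μ := by
      rw [h4σ, jt2_add_right_int]
    have step4 : jacobiTheta₂ (2*σ) ((2:ℂ)^2*σ) = jacobiTheta₂ (μ/2) μ := by
      rw [h4σ, h2σ, jt2_add_left_int, jt2_add_right_int]
    -- step v: -1/μ = ν t
    have hνμ : -1/μ = ν t := by
      have h5 : ν t * (2*(p:ℂ)*I*t) = -τ := by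
        rw [hνdef, hτdef]
        push_cast
        field_simp
        ring_nf
        rw [Complex.I_sq]
        ring
      have hcalc : ν t * μ = -1 := by
        calc ν t * μ = (ν t * (2*(p:ℂ)*I*t))/τ := by rw [hμdef]; ring
        _ = (-τ)/τ := by rw [h5]
        _ = -1 := by rw [neg_div, div_self hτ0]
      rw [show (-1/μ : ℂ) = (-1)/μ by ring]
      rw [div_eq_iff hμ0]
      exact hcalc.symm
    -- functional equations at μ
    have step5 : jacobiTheta₂ 0 μ = 1/(-I*μ)^(1/2:ℂ) * jacobiTheta₂ 0 (ν t) := by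
      have h := jacobiTheta₂_functional_equation 0 μ
      rw [show -(π:ℂ)*I*0^2/μ = 0 by ring, Complex.exp_zero, zero_div, mul_one, hνμ] at h
      exact h
    have step6 : jacobiTheta₂ (μ/2) μ
        = 1/(-I*μ)^(1/2:ℂ) * Complex.exp (-(π:ℂ)*I*μ/4) * jacobiTheta₂ (1/2) (ν t) := by
      have h := jacobiTheta₂_functional_equation (μ/2) μ
      rw [hνμ, show ((μ/2)/μ : ℂ) = 1/2 by
          rw [div_div, mul_comm, ← div_div, div_self hμ0],
        show -(π:ℂ)*I*(μ/2)^2/μ = -(π:ℂ)*I*μ/4 by field_simp; ring] at h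
      exact h
    have step7 : Complex.exp (π*I*σ) * Complex.exp (-(π:ℂ)*I*μ/4)
        = Complex.exp (-(π:ℂ)*I*p/2) := by
      rw [← Complex.exp_add]
      congr 1
      rw [hμσ]
      ring
    -- the prefactor
    have hAre : 0 < (-I*τ).re := by
      have : (-I*τ).re = t := by
        simp [Complex.mul_re, hτim]
      rw [this]; exact ht
    have hAim : (-I*τ).im < 0 := by
      have : (-I*τ).im = -(2/p) := by
        simp [Complex.mul_im, hτre]
      rw [this]
      have : (0:ℝ) < 2/p := by positivity
      linarith
    have hB : -I*μ = ((2*p*t : ℝ):ℂ) * τ⁻¹ := by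
      rw [hμdef]
      push_cast
      rw [show -I*(2*(p:ℂ)*I*(t:ℂ)/τ) = -(I*I)*(2*(p:ℂ)*(t:ℂ))/τ by ring, Complex.I_mul_I]
      ring
    have hns : 0 < Complex.normSq τ := Complex.normSq_pos.mpr hτ0
    have hBre : 0 < (-I*μ).re := by
      rw [hB]
      simp only [Complex.mul_re, Complex.ofReal_re, Complex.ofReal_im, Complex.inv_re,
        Complex.inv_im, hτre, hτim, zero_mul, sub_zero]
      have h1 : (0:ℝ) < 2/p := by positivity
      positivity
    have hBim : (-I*μ).im < 0 := by
      rw [hB]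
      have him : (((2*p*t : ℝ):ℂ) * τ⁻¹).im = (2*p*t) * (τ⁻¹).im := by
        simp [Complex.mul_im]
      rw [him, Complex.inv_im, hτim, neg_div, mul_neg, neg_lt, neg_zero]
      exact mul_pos (by positivity) (div_pos ht hns)
    have hprod : (-I*τ) * (-I*μ) = ((2*p*t : ℝ):ℂ) * (-I) := by
      rw [hμdef]
      push_cast
      rw [show (-I*τ)*(-I*(2*(p:ℂ)*I*(t:ℂ)/τ)) = (I*I)*(2*(p:ℂ)*(t:ℂ)*I)*(τ/τ) by ring,
        div_self hτ0, Complex.I_mul_I]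
      ring
    have hsqrt : (-I*τ)^(1/2:ℂ) * (-I*μ)^(1/2:ℂ)
        = (Real.sqrt (2*p*t) : ℂ) * Complex.exp (-(π:ℂ)*I/4) := by
      rw [← cpow_half_mul hAre hAim hBre hBim, hprod, neg_I_mul_cpow_half (by positivity)]
    have hABne : ((Real.sqrt (2*p*t) : ℂ)) * Complex.exp (-(π:ℂ)*I/4) ≠ 0 := by
      apply mul_ne_zero _ (Complex.exp_ne_zero _)
      have : (0:ℝ) < Real.sqrt (2*p*t) := Real.sqrt_pos.mpr (by positivity)
      exact_mod_cast this.ne'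
    have hAne : (-I*τ)^(1/2:ℂ) ≠ 0 := by
      intro h
      rw [h, zero_mul] at hsqrt
      exact hABne hsqrt.symm
    have hBne : (-I*μ)^(1/2:ℂ) ≠ 0 := by
      intro h
      rw [h, mul_zero] at hsqrt
      exact hABne hsqrt.symm
    calc (Real.sqrt t : ℂ) * jacobiTheta₂ 0 τ
        = (Real.sqrt t : ℂ)/((-I*τ)^(1/2:ℂ) * (-I*μ)^(1/2:ℂ)) *
            (jacobiTheta₂ 0 (ν t) +
              (Complex.exp (π*I*σ) * Complex.exp (-(π:ℂ)*I*μ/4)) * jacobiTheta₂ (1/2) (ν t)) := by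
          rw [step1, step2, step3, step4, step5, step6]
          field_simp
          try ring
          try tauto
      _ = (Real.sqrt t : ℂ)/((Real.sqrt (2*p*t) : ℂ) * Complex.exp (-(π:ℂ)*I/4)) *
            (jacobiTheta₂ 0 (ν t) + Complex.exp (-(π:ℂ)*I*p/2) * jacobiTheta₂ (1/2) (ν t)) := by
          rw [hsqrt, step7]
      _ = Complex.exp ((π:ℂ)*I/4) / (Real.sqrt (2*p) : ℂ) *
            (jacobiTheta₂ 0 (ν t) + Complex.exp (-(π:ℂ)*I*p/2) * jacobiTheta₂ (1/2) (ν t)) := by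
          congr 1
          rw [show (2*(p:ℝ)*t) = (2*p)*t by ring, Real.sqrt_mul (by positivity) t]
          rw [show (-(π:ℂ)*I/4) = -((π:ℂ)*I/4) by ring, Complex.exp_neg]
          have h1 : ((Real.sqrt t : ℝ):ℂ) ≠ 0 := by
            have : (0:ℝ) < Real.sqrt t := Real.sqrt_pos.mpr ht
            exact_mod_cast this.ne'
          have h2 : ((Real.sqrt (2*p) : ℝ):ℂ) ≠ 0 := by
            have : (0:ℝ) < Real.sqrt (2*p) := Real.sqrt_pos.mpr (by positivity)
            exact_mod_cast this.ne'
          have h3 := Complex.exp_ne_zero ((π:ℂ)*I/4)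
          have h2a : ((Real.sqrt 2 : ℝ):ℂ) ≠ 0 := by
            have : (0:ℝ) < Real.sqrt 2 := Real.sqrt_pos.mpr (by norm_num)
            exact_mod_cast this.ne'
          have h2b : ((Real.sqrt p : ℝ):ℂ) ≠ 0 := by
            have : (0:ℝ) < Real.sqrt p := Real.sqrt_pos.mpr hpR
            exact_mod_cast this.ne'
          push_cast
          field_simp
          try ring
  -- now the limit
  have l0 : Tendsto (fun t : ℝ => jacobiTheta₂ 0 (ν t)) (𝓝[>] (0:ℝ)) (𝓝 1) :=
    (jt2_tendsto_one 0 (-1/(2*p))).comp (tendsto_inv_sq_mul p hp)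
  have l1 : Tendsto (fun t : ℝ => jacobiTheta₂ (1/2) (ν t)) (𝓝[>] (0:ℝ)) (𝓝 1) :=
    (jt2_tendsto_one (1/2) (-1/(2*p))).comp (tendsto_inv_sq_mul p hp)
  have lconst : Tendsto (fun _ : ℝ => Complex.exp (-(π:ℂ)*I*(p:ℂ)/2)) (𝓝[>] (0:ℝ))
      (𝓝 (Complex.exp (-(π:ℂ)*I*(p:ℂ)/2))) := tendsto_const_nhds
  have lall := (l0.add (lconst.mul l1)).const_mul
    (Complex.exp ((π:ℂ)*I/4) / (Real.sqrt (2*(p:ℝ)) : ℂ))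
  simp only [mul_one] at lall
  exact lall.congr' (heq.mono fun t ht => ht.symm)

private lemma exp_pi_quarter : Complex.exp ((π:ℂ)*I/4) = ((Real.sqrt 2 : ℝ):ℂ)/2 * (1 + I) := by
  rw [show ((π:ℂ)*I/4) = ((π/4:ℝ):ℂ)*I by push_cast; ring, Complex.exp_mul_I,
    ← Complex.ofReal_cos, ← Complex.ofReal_sin, Real.cos_pi_div_four, Real.sin_pi_div_four]
  push_cast
  ring

private lemma exp_half_pi : Complex.exp ((((π/2) : ℝ):ℂ)*I) = I := by
  rw [Complex.exp_mul_I, ← Complex.ofReal_cos, ← Complex.ofReal_sin,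
    Real.cos_pi_div_two, Real.sin_pi_div_two]
  push_cast
  ring

private lemma exp_neg_half_pi : Complex.exp (((-(π/2) : ℝ):ℂ)*I) = -I := by
  rw [Complex.exp_mul_I, ← Complex.ofReal_cos, ← Complex.ofReal_sin, Real.cos_neg,
    Real.sin_neg, Real.cos_pi_div_two, Real.sin_pi_div_two]
  push_cast
  ring

private lemma gauss_G (p : ℕ) (hp : 0 < p) (hp4 : p % 4 = 1 ∨ p % 4 = 3) :
    ∑ r ∈ range p, Complex.exp (2*π*I*r^2/p)
      = (if p % 4 = 1 then 1 else I) * Real.sqrt p := by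
  have hpR : (0:ℝ) < p := by exact_mod_cast hp
  have hpC : (p:ℂ) ≠ 0 := by exact_mod_cast hp.ne'
  have huniq := tendsto_nhds_unique (claimA p hp) (claimB p hp)
  set G : ℂ := ∑ r ∈ range p, Complex.exp (2*π*I*r^2/p) with hGdef
  have hG : G = (p:ℂ) * (Complex.exp ((π:ℂ)*I/4) / (Real.sqrt (2*p) : ℂ) *
      (1 + Complex.exp (-(π:ℂ)*I*p/2))) := by
    rw [← huniq]
    field_simp
  set s2 : ℂ := ((Real.sqrt 2 : ℝ):ℂ) with hs2def
  set sp : ℂ := ((Real.sqrt p : ℝ):ℂ) with hspdef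
  have hs2ne : s2 ≠ 0 := by
    rw [hs2def]
    have : (0:ℝ) < Real.sqrt 2 := Real.sqrt_pos.mpr (by norm_num)
    exact_mod_cast this.ne'
  have hspne : sp ≠ 0 := by
    rw [hspdef]
    have : (0:ℝ) < Real.sqrt p := Real.sqrt_pos.mpr hpR
    exact_mod_cast this.ne'
  have hspp : (p:ℂ) = sp * sp := by
    rw [hspdef]
    have : Real.sqrt p * Real.sqrt p = p := Real.mul_self_sqrt hpR.le
    exact_mod_cast this.symm
  have hsqrt2p : ((Real.sqrt (2*p) : ℝ):ℂ) = s2 * sp := by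
    rw [hs2def, hspdef, ← Complex.ofReal_mul, Real.sqrt_mul (by norm_num : (0:ℝ) ≤ 2)]
  rcases hp4 with h4 | h4
  · -- p % 4 = 1 : exp(-πip/2) = -I
    obtain ⟨k, hk⟩ : ∃ k, p = 4*k + 1 := ⟨p/4, by omega⟩
    have hpc : (p:ℂ) = 4*(k:ℂ) + 1 := by exact_mod_cast congrArg (Nat.cast (R := ℂ)) hk
    have hcp : Complex.exp (-(π:ℂ)*I*p/2) = -I := by
      rw [show (-(π:ℂ)*I*p/2) = ((-(π/2) : ℝ):ℂ)*I + ((-(k:ℤ)):ℂ)*(2*π*I) by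
        push_cast; rw [hpc]; ring]
      rw [Complex.exp_add, show -(((k:ℤ)):ℂ) = (((-(k:ℤ)):ℤ):ℂ) by push_cast; ring,
        Complex.exp_int_mul_two_pi_mul_I, exp_neg_half_pi, mul_one]
    rw [if_pos h4, hG, hcp, exp_pi_quarter, hsqrt2p]
    field_simp
    linear_combination (s2*(1+I)*(1-I)) * hspp - (s2*sp*sp) * Complex.I_sq
  · -- p % 4 = 3 : exp(-πip/2) = I
    obtain ⟨k, hk⟩ : ∃ k, p = 4*k + 3 := ⟨p/4, by omega⟩
    have hpc : (p:ℂ) = 4*(k:ℂ) + 3 := by exact_mod_cast congrArg (Nat.cast (R := ℂ)) hk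
    have hcp : Complex.exp (-(π:ℂ)*I*p/2) = I := by
      rw [show (-(π:ℂ)*I*p/2) = (((π/2) : ℝ):ℂ)*I + ((-(k:ℤ)-1):ℂ)*(2*π*I) by
        push_cast; rw [hpc]; ring]
      rw [Complex.exp_add, show ((-(k:ℤ)-1):ℂ) = (((-(k:ℤ)-1 : ℤ)):ℂ) by push_cast; ring,
        Complex.exp_int_mul_two_pi_mul_I, exp_half_pi, mul_one]
    have hne : p % 4 ≠ 1 := by omega
    rw [if_neg hne, hG, hcp, exp_pi_quarter, hsqrt2p]
    field_simp
    linear_combination (s2*(1+I)*(1+I)) * hspp + (s2*sp*sp) * Complex.I_sq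

private lemma sum_range_mul_periodic (f : ℕ → ℂ) (k q : ℕ) (h : ∀ m, f (m + q) = f m) :
    ∑ m ∈ range (k*q), f m = k * ∑ m ∈ range q, f m := by
  have haux : ∀ j m, f (m + j*q) = f m := by
    intro j
    induction j with
    | zero => simp
    | succ j ihj =>
      intro m
      rw [show m + (j+1)*q = (m + j*q) + q by ring, h, ihj]
  induction k with
  | zero => simp
  | succ k ih =>
    rw [show (k+1)*q = k*q + q by ring, Finset.sum_range_add, ih]
    have hc : ∑ x ∈ range q, f (k*q + x) = ∑ x ∈ range q, f x :=
      Finset.sum_congr rfl (fun x _ => by rw [add_comm (k*q) x, haux k x])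
    rw [hc]
    push_cast
    ring

private lemma E_mod (p : ℕ) (hp0 : p ≠ 0) (a : ℕ) :
    Complex.exp (2*π*I*((a % p : ℕ):ℂ)/p) = Complex.exp (2*π*I*(a:ℂ)/p) := by
  have hpC : (p:ℂ) ≠ 0 := by exact_mod_cast hp0
  have h1 : a % p + (a / p)*p = a := by
    simpa [mul_comm] using Nat.mod_add_div a p
  have hsplit : ((a % p : ℕ):ℂ) + ((a/p : ℕ):ℂ)*p = (a:ℂ) := by
    exact_mod_cast congrArg (Nat.cast (R := ℂ)) h1
  rw [← hsplit,
    show (2*(π:ℂ)*I*(((a % p : ℕ):ℂ) + ((a/p : ℕ):ℂ)*p)/p)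
      = 2*π*I*((a % p : ℕ):ℂ)/p + ((a/p : ℕ):ℂ)*(2*π*I) by field_simp,
    Complex.exp_add, Complex.exp_nat_mul, Complex.exp_two_pi_mul_I, one_pow, mul_one]

private lemma sum_zmod_range (p : ℕ) [NeZero p] (g : ZMod p → ℂ) :
    ∑ x : ZMod p, g x = ∑ m ∈ range p, g (m : ZMod p) := by
  refine Finset.sum_bij' (fun (x : ZMod p) _ => x.val) (fun (m : ℕ) _ => (m : ZMod p))
    (fun x _ => Finset.mem_range.mpr (ZMod.val_lt x)) (fun m _ => Finset.mem_univ _)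
    (fun x _ => by show ((x.val : ℕ) : ZMod p) = x; rw [ZMod.natCast_val, ZMod.cast_id])
    (fun m hm => ZMod.val_cast_of_lt (Finset.mem_range.mp hm))
    (fun x _ => by show g x = g ((x.val : ℕ) : ZMod p); rw [ZMod.natCast_val, ZMod.cast_id])

private lemma sum_psi_zero (p : ℕ) [Fact p.Prime] :
    ∑ m ∈ range p, Complex.exp (2*π*I*(m:ℂ)/p) = 0 := by
  have hp := (Fact.out : p.Prime)
  have hpC : (p:ℂ) ≠ 0 := by exact_mod_cast hp.pos.ne'
  have hπ : (2*(π:ℂ)*I) ≠ 0 := by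
    simp [Real.pi_ne_zero, I_ne_zero]
  set z : ℂ := Complex.exp (2*π*I/p) with hz
  have hterm : ∀ m : ℕ, Complex.exp (2*π*I*(m:ℂ)/p) = z^m := by
    intro m
    rw [hz, ← Complex.exp_nat_mul]
    congr 1
    ring
  have hzp : z^p = 1 := by
    rw [hz, ← Complex.exp_nat_mul, show ((p:ℂ))*(2*π*I/p) = 2*π*I by field_simp,
      Complex.exp_two_pi_mul_I]
  have hz1 : z ≠ 1 := by
    intro h
    rw [hz] at h
    obtain ⟨m, hm⟩ := Complex.exp_eq_one_iff.mp h
    have h1 : (2*(π:ℂ)*I) = (m:ℂ)*(2*π*I)*p := by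
      field_simp at hm
      linear_combination (2*(π:ℂ)*I) * hm
    have h2 : (1:ℂ) = (m:ℂ)*p := by
      have := mul_left_cancel₀ hπ (by linear_combination h1 : (2*(π:ℂ)*I) * 1 = (2*(π:ℂ)*I) * ((m:ℂ)*p))
      exact this
    have h3 : (1:ℤ) = m*p := by exact_mod_cast h2
    have hp2 : (2:ℤ) ≤ p := by exact_mod_cast hp.two_le
    rcases le_or_gt m 0 with hm0 | hm0
    · nlinarith
    · nlinarith
  simp_rw [hterm]
  rw [geom_sum_eq hz1, hzp]
  simp

private lemma Gamma_eq (p : ℕ) [Fact p.Prime] (hodd : p ≠ 2) :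
    ∑ x : ZMod p, ((quadraticChar (ZMod p) x : ℤ):ℂ) * Complex.exp (2*π*I*(x.val:ℂ)/p)
      = ∑ m ∈ range p, Complex.exp (2*π*I*(m:ℂ)^2/p) := by
  have hp := (Fact.out : p.Prime)
  haveI : NeZero p := ⟨hp.pos.ne'⟩
  have hchar : ringChar (ZMod p) ≠ 2 := by rw [ZMod.ringChar_zmod_n]; exact hodd
  set ψ : ZMod p → ℂ := fun x => Complex.exp (2*π*I*(x.val:ℂ)/p) with hψ
  -- step 1 : ∑ ψ(x²) equals the Gauss sum over range p
  have hA : ∑ x : ZMod p, ψ (x^2) = ∑ m ∈ range p, Complex.exp (2*π*I*(m:ℂ)^2/p) := by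
    rw [sum_zmod_range p (fun x => ψ (x^2))]
    refine Finset.sum_congr rfl (fun m _ => ?_)
    have h1 : ((m : ZMod p))^2 = ((m^2 : ℕ) : ZMod p) := by push_cast; ring
    rw [hψ]
    simp only
    rw [h1, ZMod.val_natCast, E_mod p hp.pos.ne']
    congr 1
    push_cast
    ring
  -- step 2 : fiberwise count
  have hB : ∑ x : ZMod p, ψ (x^2)
      = ∑ y : ZMod p, (((quadraticChar (ZMod p) y + 1 : ℤ)):ℂ) * ψ y := by
    rw [← Finset.sum_fiberwise Finset.univ (fun x : ZMod p => x^2) (fun x => ψ (x^2))]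
    refine Finset.sum_congr rfl (fun y _ => ?_)
    have hinner : ∑ x ∈ Finset.univ.filter (fun x : ZMod p => x^2 = y), ψ (x^2)
        = ((Finset.univ.filter (fun x : ZMod p => x^2 = y)).card : ℂ) * ψ y := by
      rw [Finset.sum_congr rfl (fun x hx => by
        rw [(Finset.mem_filter.mp hx).2] : ∀ x ∈ Finset.univ.filter (fun x : ZMod p => x^2 = y),
          ψ (x^2) = ψ y)]
      rw [Finset.sum_const, nsmul_eq_mul]
    rw [hinner]
    congr 1
    have hcard := quadraticChar_card_sqrts hchar y
    rw [Set.toFinset_setOf] at hcard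
    exact_mod_cast congrArg (fun z : ℤ => (z : ℂ)) hcard
  -- step 3 : expand
  have hC : ∑ y : ZMod p, (((quadraticChar (ZMod p) y + 1 : ℤ)):ℂ) * ψ y
      = (∑ y : ZMod p, ((quadraticChar (ZMod p) y : ℤ):ℂ) * ψ y) + ∑ y : ZMod p, ψ y := by
    rw [← Finset.sum_add_distrib]
    refine Finset.sum_congr rfl (fun y _ => ?_)
    push_cast
    ring
  -- step 4 : ∑ ψ = 0
  have hD : ∑ y : ZMod p, ψ y = 0 := by
    rw [sum_zmod_range p ψ, hψ]
    simp only
    rw [Finset.sum_congr rfl (fun m _ => by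
      rw [ZMod.val_natCast, E_mod p hp.pos.ne'] :
      ∀ m ∈ range p, Complex.exp (2*π*I*(((m : ZMod p)).val:ℂ)/p)
        = Complex.exp (2*π*I*(m:ℂ)/p))]
    exact sum_psi_zero p
  have := hA.symm.trans (hB.trans hC)
  rw [hD, add_zero] at this
  exact this.symm

private lemma S_eq (p n' : ℕ) [Fact p.Prime] (hodd : p ≠ 2) :
    ∑ m ∈ range p, ((legendreSym p (m:ℤ) : ℤ):ℂ) * Complex.exp (2*π*I*(m:ℂ)*(n':ℂ)/p)
      = ((legendreSym p (n':ℤ) : ℤ):ℂ) * ∑ m ∈ range p, Complex.exp (2*π*I*(m:ℂ)^2/p) := by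
  have hp := (Fact.out : p.Prime)
  haveI : NeZero p := ⟨hp.pos.ne'⟩
  have hchar : ringChar (ZMod p) ≠ 2 := by rw [ZMod.ringChar_zmod_n]; exact hodd
  set ψ : ZMod p → ℂ := fun x => Complex.exp (2*π*I*(x.val:ℂ)/p) with hψ
  set c : ZMod p := (n' : ZMod p) with hc
  have hleg : ∀ a : ℕ, legendreSym p (a:ℤ) = quadraticChar (ZMod p) ((a : ZMod p)) := by
    intro a
    have h1 : (((a:ℤ) : ZMod p)) = (a : ZMod p) := by push_cast; ring
    rw [legendreSym, h1]
  -- transfer LHS to a sum over ZMod p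
  have hLHS : ∑ m ∈ range p, ((legendreSym p (m:ℤ) : ℤ):ℂ) * Complex.exp (2*π*I*(m:ℂ)*(n':ℂ)/p)
      = ∑ x : ZMod p, ((quadraticChar (ZMod p) x : ℤ):ℂ) * ψ (x * c) := by
    rw [sum_zmod_range p (fun x => ((quadraticChar (ZMod p) x : ℤ):ℂ) * ψ (x * c))]
    refine Finset.sum_congr rfl (fun m _ => ?_)
    rw [hleg m]
    congr 1
    rw [hψ, hc]
    simp only
    have h2 : ((m : ZMod p)) * ((n' : ZMod p)) = ((m * n' : ℕ) : ZMod p) := by push_cast; ring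
    rw [h2, ZMod.val_natCast, E_mod p hp.pos.ne']
    congr 1
    push_cast
    ring
  rw [hLHS, hleg n', ← hc]
  rcases eq_or_ne c 0 with h0 | h0
  · rw [h0]
    simp only [MulChar.map_zero, Int.cast_zero, zero_mul]
    have hψ0 : ψ 0 = 1 := by rw [hψ]; simp
    calc ∑ x : ZMod p, ((quadraticChar (ZMod p) x : ℤ):ℂ) * ψ (x * 0)
        = ∑ x : ZMod p, ((quadraticChar (ZMod p) x : ℤ):ℂ) := by
          refine Finset.sum_congr rfl (fun x _ => ?_)
          rw [mul_zero, hψ0, mul_one]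
      _ = (((∑ x : ZMod p, quadraticChar (ZMod p) x : ℤ)):ℂ) := by push_cast; ring
      _ = 0 := by rw [quadraticChar_sum_zero hchar]; simp
  · -- reindex by multiplication with c⁻¹
    have hcinv : c⁻¹ * c = 1 := inv_mul_cancel₀ h0
    set e : ZMod p ≃ ZMod p := Equiv.mulRight₀ c⁻¹ (inv_ne_zero h0) with hedef
    have hsum := Equiv.sum_comp e (fun x => ((quadraticChar (ZMod p) x : ℤ):ℂ) * ψ (x * c))
    have hterm : ∀ x : ZMod p,
        ((quadraticChar (ZMod p) (e x) : ℤ):ℂ) * ψ ((e x) * c)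
          = ((quadraticChar (ZMod p) c : ℤ):ℂ) *
              (((quadraticChar (ZMod p) x : ℤ):ℂ) * ψ x) := by
      intro x
      have he : e x = x * c⁻¹ := by rw [hedef]; rfl
      have h3 : (x * c⁻¹) * c = x := by rw [mul_assoc, hcinv, mul_one]
      have h4 : quadraticChar (ZMod p) (x * c⁻¹) = quadraticChar (ZMod p) x *
          quadraticChar (ZMod p) c⁻¹ := map_mul _ _ _
      have h5 : quadraticChar (ZMod p) c⁻¹ = quadraticChar (ZMod p) c := by
        have h1 : quadraticChar (ZMod p) c⁻¹ * quadraticChar (ZMod p) c = 1 := by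
          rw [← map_mul, hcinv, map_one]
        have h2 : quadraticChar (ZMod p) c * quadraticChar (ZMod p) c = 1 := by
          have := quadraticChar_sq_one h0
          rwa [sq] at this
        linear_combination (quadraticChar (ZMod p) c) * h1 - (quadraticChar (ZMod p) c⁻¹) * h2
      rw [he, h3, h4, h5]
      push_cast
      ring
    rw [← hsum, Finset.sum_congr rfl (fun x _ => hterm x), ← Finset.mul_sum, Gamma_eq p hodd]

/-- for p an odd prime, α ≥ 1 and n = p^{α−1}·n′ with n′ ≥ 1,
    ∑_{m=0}^{p^α − 1} (m ∣ p)·exp(2πi·m·n/p^α) = p^{α−1}·(n′ ∣ p)·ε_p·√p,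
    where ε_p = 1 if p ≡ 1 (mod 4) and ε_p = i if p ≡ 3 (mod 4). -/
theorem gauss_sum_eval
    (p : ℕ) [Fact p.Prime] (hodd : p ≠ 2) (α n n' : ℕ) (hα : 0 < α) (hn' : 0 < n')
    (hn : n = p ^ (α - 1) * n') :
    ∑ m ∈ Finset.range (p ^ α),
        ((legendreSym p (m : ℤ) : ℤ) : ℂ) *
          Complex.exp (2 * Real.pi * Complex.I * m * n / (p : ℂ) ^ α)
      = (p : ℂ) ^ (α - 1) * ((legendreSym p (n' : ℤ) : ℤ) : ℂ) *
          (if p % 4 = 1 then 1 else Complex.I) * Real.sqrt p := by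
  have hp := (Fact.out : p.Prime)
  have hp0 : 0 < p := hp.pos
  have hpC : (p:ℂ) ≠ 0 := by exact_mod_cast hp0.ne'
  have hp4 : p % 4 = 1 ∨ p % 4 = 3 := by
    have h2 : p % 2 = 1 := Nat.odd_iff.mp (hp.odd_of_ne_two hodd)
    omega
  have hpow : p^α = p^(α-1) * p := by
    conv_lhs => rw [show α = (α-1)+1 by omega]
    rw [pow_succ]
  set f : ℕ → ℂ := fun m =>
    ((legendreSym p (m:ℤ) : ℤ):ℂ) * Complex.exp (2*π*I*(m:ℂ)*(n':ℂ)/(p:ℂ)) with hf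
  have hexp : ∀ m : ℕ, Complex.exp (2*(π:ℂ)*I*(m:ℂ)*(n:ℂ)/(p:ℂ)^α)
      = Complex.exp (2*π*I*(m:ℂ)*(n':ℂ)/(p:ℂ)) := by
    intro m
    congr 1
    have h1 : ((p:ℂ))^α = (p:ℂ)^(α-1)*(p:ℂ) := by
      rw [← pow_succ]
      congr 1
      omega
    have h2 : (n:ℂ) = (p:ℂ)^(α-1) * (n':ℂ) := by rw [hn]; push_cast; ring
    have h3 : ((p:ℂ))^(α-1) ≠ 0 := pow_ne_zero _ hpC
    rw [h1, h2]
    field_simp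
  have hper : ∀ m, f (m + p) = f m := by
    intro m
    rw [hf]
    simp only
    have hleg : legendreSym p ((m+p : ℕ):ℤ) = legendreSym p (m:ℤ) := by
      rw [legendreSym.mod p ((m+p:ℕ):ℤ), legendreSym.mod p (m:ℤ)]
      congr 1
      push_cast
      rw [show (m:ℤ) + (p:ℤ) = (m:ℤ) + (p:ℤ)*1 by ring, Int.add_mul_emod_self_left]
    have hexpper : Complex.exp (2*(π:ℂ)*I*((m+p:ℕ):ℂ)*(n':ℂ)/(p:ℂ))
        = Complex.exp (2*(π:ℂ)*I*(m:ℂ)*(n':ℂ)/(p:ℂ)) := by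
      rw [show 2*(π:ℂ)*I*((m+p:ℕ):ℂ)*(n':ℂ)/(p:ℂ)
          = 2*π*I*(m:ℂ)*(n':ℂ)/p + (n':ℂ)*(2*π*I) by push_cast; field_simp,
        Complex.exp_add, Complex.exp_nat_mul, Complex.exp_two_pi_mul_I, one_pow, mul_one]
    rw [hleg, hexpper]
  calc ∑ m ∈ Finset.range (p ^ α),
        ((legendreSym p (m : ℤ) : ℤ) : ℂ) *
          Complex.exp (2 * Real.pi * Complex.I * m * n / (p : ℂ) ^ α)
      = ∑ m ∈ Finset.range (p ^ α), f m := by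
        refine Finset.sum_congr rfl (fun m _ => ?_)
        rw [hf]
        simp only
        rw [hexp m]
    _ = ((p^(α-1) : ℕ):ℂ) * ∑ m ∈ range p, f m := by
        rw [hpow]
        exact sum_range_mul_periodic f (p^(α-1)) p hper
    _ = ((p^(α-1) : ℕ):ℂ) * (((legendreSym p (n':ℤ) : ℤ):ℂ) *
          ∑ m ∈ range p, Complex.exp (2*π*I*(m:ℂ)^2/p)) := by
        rw [hf, S_eq p n' hodd]
    _ = (p : ℂ) ^ (α - 1) * ((legendreSym p (n' : ℤ) : ℤ) : ℂ) *
          (if p % 4 = 1 then 1 else Complex.I) * Real.sqrt p := by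
        rw [gauss_G p hp0 hp4]
        push_cast
        ring
end
end

section
/- Let ℓ and r be integers with 2 ≤ r ≤ ⌊ℓ/2⌋ − 1. Then α_{r−1,ℓ−2} + α_{r,ℓ} − α_{r,ℓ−1} = 0. -/
/-- Binomial coefficient C(n, j) for integers, taken to be 0 when j < 0 or j > n. -/
def Cb (n j : ℤ) : ℤ := if 0 ≤ j ∧ j ≤ n then (n.toNat).choose j.toNat else 0

/-- The sequence A_{r,ℓ}(m): A_{1,ℓ}(m) = 1 and, for r ≥ 2,
    A_{r,ℓ}(m) = A_{r−1,ℓ}(m) − C(ℓ−2(r−1), m−(r−1))·A_{r−1,ℓ}(r−1). -/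
def Aseq (ℓ : ℕ) : ℕ → ℤ → ℤ
  | 0, _ => 1
  | 1, _ => 1
  | (r + 2), m =>
      Aseq ℓ (r + 1) m
        - Cb ((ℓ : ℤ) - 2 * (r + 1)) (m - (r + 1)) * Aseq ℓ (r + 1) ((r : ℤ) + 1)

/-- α_{r,ℓ} = A_{r,ℓ}(r). -/
def alphaSeq (ℓ r : ℕ) : ℤ := Aseq ℓ r r

lemma Cb_neg_right (n j : ℤ) (h : j < 0) : Cb n j = 0 := by
  unfold Cb; rw [if_neg]; omega

lemma Cb_neg_left (n j : ℤ) (h : n < 0) : Cb n j = 0 := by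
  unfold Cb; rw [if_neg]; omega

lemma Cb_zero_right (n : ℤ) (h : 0 ≤ n) : Cb n 0 = 1 := by
  unfold Cb; rw [if_pos (by omega)]; simp

lemma Cb_big (n j : ℤ) (h : n < j) : Cb n j = 0 := by
  unfold Cb; rw [if_neg]; omega

lemma Cb_self (n : ℤ) (h : 0 ≤ n) : Cb n n = 1 := by
  unfold Cb; rw [if_pos (by omega)]; simp

lemma Cb_pascal (n j : ℤ) (hn : 1 ≤ n) : Cb n j = Cb (n-1) j + Cb (n-1) (j-1) := by
  unfold Cb
  split_ifs with h1 h2 h3 h2 h3 <;> try omega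
  · -- 1 ≤ j ≤ n-1
    have hn' : n.toNat = (n-1).toNat + 1 := by omega
    have hj' : j.toNat = (j-1).toNat + 1 := by omega
    rw [hn', hj', Nat.choose_succ_succ]
    push_cast
    ring
  · -- j = 0
    have hj0 : j.toNat = 0 := by omega
    rw [hj0]; simp
  · -- j = n
    have h4 : j.toNat = (n-1).toNat + 1 := by omega
    have h5 : (j-1).toNat = (n-1).toNat := by omega
    have hn' : n.toNat = (n-1).toNat + 1 := by omega
    rw [hn', h4, h5, Nat.choose_self, Nat.choose_self]; ring

/-- term k of the key sum -/
def tterm (ℓ m : ℤ) (k : ℕ) : ℤ :=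
  (-1)^(k+1) * Cb (ℓ - k - 1) ((k:ℤ) - 1) * Cb (ℓ - 2*k) (m - k)

/-- the key sum -/
def fsum (ℓ : ℤ) (m : ℕ) : ℤ := ∑ k ∈ Finset.range m, tterm ℓ (m:ℤ) (k+1)

lemma tterm_zero (ℓ m : ℤ) : tterm ℓ m 0 = 0 := by
  simp only [tterm, Nat.cast_zero]
  rw [Cb_neg_right _ _ (by norm_num : (0:ℤ) - 1 < 0)]
  ring

lemma tterm_succ (ℓ m : ℤ) (j : ℕ) :
    tterm ℓ m (j+1) = (-1)^(j+2) * Cb (ℓ - j - 2) (j:ℤ) * Cb (ℓ - 2*j - 2) (m - j - 1) := by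
  have e1 : ℓ - ((j:ℤ)+1) - 1 = ℓ - j - 2 := by ring
  have e2 : ((j:ℤ)+1) - 1 = (j:ℤ) := by ring
  have e3 : ℓ - 2*((j:ℤ)+1) = ℓ - 2*j - 2 := by ring
  have e4 : m - ((j:ℤ)+1) = m - j - 1 := by ring
  simp only [tterm]
  push_cast
  rw [e1, e2, e3, e4]

lemma tterm_big (ℓ m : ℤ) (k : ℕ) (h : m < k) : tterm ℓ m k = 0 := by
  simp only [tterm]
  rw [Cb_neg_right (ℓ - 2*k) (m - k) (by omega)]
  ring

lemma tterm_rec (ℓ m : ℤ) (hm : 2 ≤ m) (j : ℕ) :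
    tterm ℓ m (j+1)
      = tterm (ℓ-1) m (j+1) + tterm (ℓ-1) (m-1) (j+1) - tterm (ℓ-2) (m-1) j := by
  rw [tterm_succ, tterm_succ, tterm_succ]
  simp only [tterm]
  have e3 : ℓ - 2 - 2*(j:ℤ) = ℓ - 2*(j:ℤ) - 2 := by ring
  have e4 : m - 1 - (j:ℤ) = m - (j:ℤ) - 1 := by ring
  rw [e3, e4]
  rcases le_or_gt (2*(j:ℤ)+3) ℓ with hA | hB
  · -- generic case: both Pascals fire
    rw [Cb_pascal (ℓ - (j:ℤ) - 2) (j:ℤ) (by omega),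
        Cb_pascal (ℓ - 2*(j:ℤ) - 2) (m - (j:ℤ) - 1) (by omega)]
    ring_nf
  · rcases eq_or_lt_of_le (by omega : ℓ ≤ 2*(j:ℤ)+2) with hE | hL
    · -- ℓ = 2j+2
      have z1 : Cb (ℓ - 1 - 2*(j:ℤ) - 2) (m - (j:ℤ) - 1) = 0 := Cb_neg_left _ _ (by omega)
      have z2 : Cb (ℓ - 1 - 2*(j:ℤ) - 2) (m - (j:ℤ) - 1 - 1) = 0 := Cb_neg_left _ _ (by omega)
      rw [z1, z2]
      rcases Nat.eq_zero_or_pos j with hj0 | hj1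
      · subst hj0
        have z3 : Cb (ℓ - 2*((0:ℕ):ℤ) - 2) (m - ((0:ℕ):ℤ) - 1) = 0 :=
          Cb_big _ _ (by push_cast; omega)
        have z4 : Cb (ℓ - 2 - ((0:ℕ):ℤ) - 1) (((0:ℕ):ℤ) - 1) = 0 :=
          Cb_neg_right _ _ (by norm_num)
        rw [z3, z4]; try ring
      · have e1 : Cb (ℓ - (j:ℤ) - 2) (j:ℤ) = 1 := by
          rw [show ℓ - (j:ℤ) - 2 = (j:ℤ) by omega]
          exact Cb_self _ (by omega)
        have e2 : Cb (ℓ - 2 - (j:ℤ) - 1) ((j:ℤ) - 1) = 1 := by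
          rw [show ℓ - 2 - (j:ℤ) - 1 = (j:ℤ) - 1 by omega]
          exact Cb_self _ (by omega)
        rw [e1, e2]
        ring_nf
    · -- ℓ ≤ 2j+1 : everything vanishes
      rw [Cb_neg_left (ℓ - 2*(j:ℤ) - 2) (m - (j:ℤ) - 1) (by omega),
          Cb_neg_left (ℓ - 1 - 2*(j:ℤ) - 2) (m - (j:ℤ) - 1) (by omega),
          Cb_neg_left (ℓ - 1 - 2*(j:ℤ) - 2) (m - (j:ℤ) - 1 - 1) (by omega)]
      ring

lemma fsum_zero (m : ℕ) (ℓ : ℤ) (h : ℓ ≤ m) : fsum ℓ m = 0 := by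
  unfold fsum
  apply Finset.sum_eq_zero
  intro k _
  simp only [tterm, Cb]
  split_ifs with h1 h2 <;> first | (exfalso; omega) | ring

lemma fsum_rec (s : ℕ) (ℓ : ℤ) :
    fsum ℓ (s+2) = fsum (ℓ-1) (s+2) + fsum (ℓ-1) (s+1) - fsum (ℓ-2) (s+1) := by
  have hc2 : ((s+2:ℕ):ℤ) = (s:ℤ)+2 := by push_cast; ring
  have hc1 : ((s+1:ℕ):ℤ) = (s:ℤ)+1 := by push_cast; ring
  unfold fsum
  rw [hc2, hc1]
  have step : ∀ k ∈ Finset.range (s+2),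
      tterm ℓ ((s:ℤ)+2) (k+1)
        = tterm (ℓ-1) ((s:ℤ)+2) (k+1) + tterm (ℓ-1) ((s:ℤ)+1) (k+1)
            - tterm (ℓ-2) ((s:ℤ)+1) k := by
    intro k _
    have h := tterm_rec ℓ ((s:ℤ)+2) (by omega) k
    have e : (s:ℤ)+2-1 = (s:ℤ)+1 := by ring
    rwa [e] at h
  rw [Finset.sum_congr rfl step, Finset.sum_sub_distrib, Finset.sum_add_distrib]
  congr 1
  · congr 1
    rw [Finset.sum_range_succ]
    rw [tterm_big (ℓ-1) ((s:ℤ)+1) (s+1+1) (by push_cast; omega), add_zero]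
  · rw [show s+2 = (s+1)+1 from rfl, Finset.sum_range_succ']
    rw [tterm_zero, add_zero]

lemma fsum_one : ∀ m : ℕ, 1 ≤ m → ∀ ℓ : ℤ, (m:ℤ) + 1 ≤ ℓ → fsum ℓ m = 1 := by
  intro m
  induction m with
  | zero => intro h; omega
  | succ s IHs =>
    intro _ ℓ hℓ
    rcases Nat.eq_zero_or_pos s with rfl | hs
    · -- base m = 1
      unfold fsum
      rw [Finset.sum_range_one, tterm_succ]
      push_cast
      rw [show ℓ - 0 - 2 = ℓ - 2 by ring, Cb_zero_right (ℓ - 2) (by omega)]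
      norm_num
    · obtain ⟨n, rfl⟩ : ∃ n, s = n + 1 := ⟨s - 1, by omega⟩
      have main : ∀ L : ℤ, ((n+2:ℕ):ℤ)+1 ≤ L → fsum L (n+2) = 1 := by
        refine Int.le_induction ?_ ?_
        · rw [fsum_rec n (((n+2:ℕ):ℤ)+1)]
          rw [fsum_zero (n+2) (((n+2:ℕ):ℤ)+1-1) (by push_cast; omega),
              fsum_zero (n+1) (((n+2:ℕ):ℤ)+1-2) (by push_cast; omega),
              IHs (by omega) (((n+2:ℕ):ℤ)+1-1) (by push_cast; omega)]
          ring
        · intro L hL IH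
          rw [fsum_rec n (L+1), show L+1-1 = L by ring, show L+1-2 = L-1 by ring]
          rw [IH, IHs (by omega) L (by push_cast at hL ⊢; omega),
              IHs (by omega) (L-1) (by push_cast at hL ⊢; omega)]
          ring
      exact main ℓ (by push_cast at hℓ ⊢; omega)

lemma Aseq_sum (ℓ : ℕ) : ∀ r : ℕ, ∀ m : ℤ,
    Aseq ℓ (r+1) m
      = 1 - ∑ k ∈ Finset.range r,
          Cb ((ℓ:ℤ) - 2*((k:ℤ)+1)) (m - ((k:ℤ)+1)) * alphaSeq ℓ (k+1) := by
  intro r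
  induction r with
  | zero => intro m; simp [Aseq]
  | succ r IH =>
    intro m
    have hdef : Aseq ℓ (r+2) m
        = Aseq ℓ (r+1) m
          - Cb ((ℓ:ℤ) - 2*((r:ℤ)+1)) (m - ((r:ℤ)+1)) * Aseq ℓ (r+1) ((r:ℤ)+1) := by
      simp [Aseq]
      try ring
    have halpha : Aseq ℓ (r+1) ((r:ℤ)+1) = alphaSeq ℓ (r+1) := by
      unfold alphaSeq
      norm_cast
    rw [hdef, halpha, IH, Finset.sum_range_succ]
    ring

lemma alpha_cf : ∀ r : ℕ, 1 ≤ r → ∀ ℓ : ℕ, 2*r ≤ ℓ →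
    alphaSeq ℓ r = (-1)^(r+1) * Cb ((ℓ:ℤ) - r - 1) ((r:ℤ) - 1) := by
  intro r
  induction r using Nat.strong_induction_on with
  | _ r IH =>
    intro hr ℓ hℓ
    obtain ⟨s, rfl⟩ : ∃ s, r = s + 1 := ⟨r - 1, by omega⟩
    have hA : alphaSeq ℓ (s+1) = Aseq ℓ (s+1) ((s+1:ℕ):ℤ) := rfl
    rw [hA, Aseq_sum]
    have hsum : ∑ k ∈ Finset.range s,
          Cb ((ℓ:ℤ) - 2*((k:ℤ)+1)) (((s+1:ℕ):ℤ) - ((k:ℤ)+1)) * alphaSeq ℓ (k+1)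
        = ∑ k ∈ Finset.range s, tterm (ℓ:ℤ) ((s:ℤ)+1) (k+1) := by
      apply Finset.sum_congr rfl
      intro k hk
      have hk' : k < s := Finset.mem_range.mp hk
      rw [IH (k+1) (by omega) (by omega) ℓ (by omega), tterm_succ]
      push_cast
      ring_nf
    rw [hsum]
    have hfs : fsum (ℓ:ℤ) (s+1)
        = ∑ k ∈ Finset.range s, tterm (ℓ:ℤ) (((s+1:ℕ)):ℤ) (k+1)
            + tterm (ℓ:ℤ) ((s+1:ℕ):ℤ) (s+1) := by
      unfold fsum
      rw [Finset.sum_range_succ]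
    have hc1 : ((s+1:ℕ):ℤ) = (s:ℤ)+1 := by push_cast; ring
    rw [hc1] at hfs
    have hone : fsum (ℓ:ℤ) (s+1) = 1 := fsum_one (s+1) (by omega) _ (by push_cast; omega)
    have hlast : tterm (ℓ:ℤ) ((s:ℤ)+1) (s+1)
        = (-1)^(s+2) * Cb ((ℓ:ℤ) - s - 2) (s:ℤ) := by
      rw [tterm_succ, show (s:ℤ)+1 - s - 1 = 0 by ring, Cb_zero_right _ (by omega)]
      ring
    have hmain : ∑ k ∈ Finset.range s, tterm (ℓ:ℤ) ((s:ℤ)+1) (k+1)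
        = fsum (ℓ:ℤ) (s+1) - tterm (ℓ:ℤ) ((s:ℤ)+1) (s+1) := by
      rw [hfs]; ring
    rw [hmain, hone, hlast]
    push_cast
    rw [show (ℓ:ℤ) - ((s:ℤ)+1) - 1 = (ℓ:ℤ) - s - 2 by ring,
        show (s:ℤ)+1-1 = (s:ℤ) by ring]
    ring

/-- for integers 2 ≤ r ≤ ⌊ℓ/2⌋ − 1,
    α_{r−1,ℓ−2} + α_{r,ℓ} − α_{r,ℓ−1} = 0. -/
theorem alpha_combinatorial_identity (ℓ r : ℕ) (hr : 2 ≤ r) (hrl : r ≤ ℓ / 2 - 1) :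
    alphaSeq (ℓ - 2) (r - 1) + alphaSeq ℓ r - alphaSeq (ℓ - 1) r = 0 := by
  have hℓ : 2*r + 2 ≤ ℓ := by omega
  have h1 := alpha_cf r (by omega) ℓ (by omega)
  have h2 := alpha_cf r (by omega) (ℓ-1) (by omega)
  have h3 := alpha_cf (r-1) (by omega) (ℓ-2) (by omega)
  have c1 : ((ℓ-1:ℕ):ℤ) = (ℓ:ℤ) - 1 := by omega
  have c2 : ((ℓ-2:ℕ):ℤ) = (ℓ:ℤ) - 2 := by omega
  have c3 : ((r-1:ℕ):ℤ) = (r:ℤ) - 1 := by omega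
  have e : r - 1 + 1 = r := by omega
  rw [c1] at h2
  rw [c2, c3, e] at h3
  rw [h1, h2, h3]
  rw [Cb_pascal ((ℓ:ℤ) - r - 1) ((r:ℤ) - 1) (by omega)]
  ring_nf
end

section
/- Let k ≥ 3 be an odd integer, λ = (k−1)/2, N a positive integer with 4 ∣ N, and χ a Dirichlet character modulo N with values in ℂ. Let p be a prime not dividing N, a : ℕ → ℂ, ℓ a positive integer, and n a positive integer with p^{2(ℓ−1)} ∣ n. Then the ℓ-fold iterate satisfies (U_p^ℓ a)(n) = a(n·p^{2ℓ}) + ∑_{m=1}^{ℓ−1} C(ℓ,m)·χ(p)^{2m}·p^{(k−2)m}·a⟨n·p^{2ℓ−4m}⟩ + χ(p)^{2ℓ−1}·((−1)^λ·(n/p^{2ℓ−2}) ∣ p)·p^{(k−3)/2 + (k−2)(ℓ−1)}·a(n/p^{2ℓ−2}) + χ(p)^{2ℓ}·p^{(k−2)ℓ}·[a(n/p^{2ℓ}) if p^{2ℓ} ∣ n, else 0], where C(ℓ,m) is the binomial coefficient and a⟨n·p^{2ℓ−4m}⟩ means a(n·p^{2ℓ−4m}) if 4m ≤ 2ℓ,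 and a(n/p^{4m−2ℓ}) if 4m > 2ℓ (this quotient is an integer since 4m − 2ℓ ≤ 2(ℓ−1) and p^{2(ℓ−1)} ∣ n). -/
open Finset

private lemma sum_Icc_one (n : ℕ) (f : ℕ → ℂ) :
    ∑ i ∈ Icc 1 n, f i = ∑ i ∈ range n, f (i+1) := by
  have h : Icc 1 n = Ico 1 (n+1) := by rw [Finset.Ico_add_one_right_eq_Icc]
  rw [h, Finset.sum_Ico_eq_sum_range]
  simp [Nat.add_comm]

private lemma pascal_sum (j : ℕ) (Y : ℕ → ℂ) :
    ∑ m ∈ Icc 1 (j+1), ((j+2).choose m : ℂ) * Y m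
      = (∑ m ∈ Icc 1 j, ((j+1).choose m : ℂ) * Y m)
        + (∑ m ∈ Icc 1 j, ((j+1).choose m : ℂ) * Y (m+1))
        + Y 1 + Y (j+1) := by
  rw [sum_Icc_one, sum_Icc_one, sum_Icc_one]
  have key : ∀ i, ((j+2).choose (i+1) : ℂ) * Y (i+1)
      = ((j+1).choose (i+1) : ℂ) * Y (i+1) + ((j+1).choose i : ℂ) * Y (i+1) := by
    intro i
    rw [show (j+2).choose (i+1) = (j+1).choose i + (j+1).choose (i+1) from
      Nat.choose_succ_succ (j+1) i]
    push_cast; ring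
  calc ∑ i ∈ range (j+1), ((j+2).choose (i+1) : ℂ) * Y (i+1)
      = ∑ i ∈ range (j+1), (((j+1).choose (i+1) : ℂ) * Y (i+1)
          + ((j+1).choose i : ℂ) * Y (i+1)) :=
        Finset.sum_congr rfl fun i _ => key i
    _ = (∑ i ∈ range (j+1), ((j+1).choose (i+1) : ℂ) * Y (i+1))
        + ∑ i ∈ range (j+1), ((j+1).choose i : ℂ) * Y (i+1) := Finset.sum_add_distrib
    _ = _ := by
        rw [Finset.sum_range_succ (fun i => ((j+1).choose (i+1) : ℂ) * Y (i+1)) j,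
          Finset.sum_range_succ' (fun i => ((j+1).choose i : ℂ) * Y (i+1)) j]
        simp only [Nat.choose_self, Nat.choose_zero_right, Nat.cast_one, one_mul]
        ring

private lemma leg_zero (k p e t : ℕ) [Fact p.Prime] (he : 0 < e) :
    (legendreSym p ((-1) ^ ((k - 1) / 2) * ((p ^ e * t : ℕ) : ℤ))) = 0 := by
  rw [legendreSym.eq_zero_iff]
  obtain ⟨e, rfl⟩ : ∃ e', e = e' + 1 := ⟨e - 1, by omega⟩
  push_cast
  simp [ZMod.natCast_self]

private lemma Up_aux (k N : ℕ) (χ : DirichletCharacter ℂ N) (p : ℕ) [Fact p.Prime]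
    (a : ℕ → ℂ) : ∀ j t : ℕ,
    (Uop k N χ p)^[j+1] a (p ^ (2*j) * t)
      = a (p ^ (4*j+2) * t)
        + ∑ m ∈ Icc 1 j, ((j+1).choose m : ℂ) *
            (χ (p : ZMod N) ^ (2*m) * (p : ℂ) ^ ((k-2)*m) * a (p ^ (4*j+2-4*m) * t))
        + χ (p : ZMod N) ^ (2*j+1) *
            ((legendreSym p ((-1) ^ ((k - 1) / 2) * (t : ℤ)) : ℤ) : ℂ) *
            (p : ℂ) ^ ((k-1)/2 - 1 + (k-2)*j) * a t
        + χ (p : ZMod N) ^ (2*j+2) * (p : ℂ) ^ ((k-2)*(j+1)) *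
            (if p ^ 2 ∣ t then a (t / p ^ 2) else 0) := by
  intro j
  induction j with
  | zero =>
    intro t
    simp only [Function.iterate_one, Uop, Nat.mul_zero, pow_zero, one_mul, Nat.zero_add,
      Nat.mul_one, Icc_self, Icc_eq_empty_of_lt, sum_empty]
    norm_num
  | succ j ih =>
    intro t
    have hp : 0 < p := (Fact.out : p.Prime).pos
    rw [Function.iterate_succ_apply', Uop]
    have hz : (legendreSym p ((-1) ^ ((k - 1) / 2) * ((p ^ (2*(j+1)) * t : ℕ) : ℤ))) = 0 :=
      leg_zero k p (2*(j+1)) t (by omega)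
    rw [hz]
    have h1 : p ^ 2 * (p ^ (2*(j+1)) * t) = p ^ (2*j) * (p ^ 4 * t) := by ring
    have h3 : p ^ 2 ∣ p ^ (2*(j+1)) * t := Dvd.dvd.mul_right (pow_dvd_pow p (by omega)) t
    have h4 : p ^ (2*(j+1)) * t / p ^ 2 = p ^ (2*j) * t := by
      rw [show p ^ (2*(j+1)) = p ^ 2 * p ^ (2*j) by ring, mul_assoc,
        Nat.mul_div_cancel_left _ (pow_pos hp 2)]
    rw [h1, if_pos h3, h4, ih (p ^ 4 * t), ih t]
    have hz2 : (legendreSym p ((-1) ^ ((k - 1) / 2) * ((p ^ 4 * t : ℕ) : ℤ))) = 0 :=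
      leg_zero k p 4 t (by omega)
    rw [hz2]
    have h5 : p ^ 2 ∣ p ^ 4 * t := Dvd.dvd.mul_right (pow_dvd_pow p (by omega)) t
    have h6 : p ^ 4 * t / p ^ 2 = p ^ 2 * t := by
      rw [show p ^ 4 = p ^ 2 * p ^ 2 by ring, mul_assoc,
        Nat.mul_div_cancel_left _ (pow_pos hp 2)]
    rw [if_pos h5, h6]
    have h7 : p ^ (4*j+2) * (p ^ 4 * t) = p ^ (4*(j+1)+2) * t := by ring
    rw [h7]
    simp only [Int.cast_zero, mul_zero, zero_mul, add_zero, zero_add]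
    have hsum : ∑ m ∈ Icc 1 (j+1), (((j+1+1)).choose m : ℂ) *
          (χ (p : ZMod N) ^ (2*m) * (p:ℂ) ^ ((k-2)*m) * a (p ^ (4*(j+1)+2-4*m) * t))
        = (∑ m ∈ Icc 1 j, ((j+1).choose m : ℂ) *
            (χ (p : ZMod N) ^ (2*m) * (p:ℂ) ^ ((k-2)*m) * a (p ^ (4*(j+1)+2-4*m) * t)))
          + (∑ m ∈ Icc 1 j, ((j+1).choose m : ℂ) *
            (χ (p : ZMod N) ^ (2*(m+1)) * (p:ℂ) ^ ((k-2)*(m+1)) * a (p ^ (4*(j+1)+2-4*(m+1)) * t)))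
          + (χ (p : ZMod N) ^ (2*1) * (p:ℂ) ^ ((k-2)*1) * a (p ^ (4*(j+1)+2-4*1) * t))
          + (χ (p : ZMod N) ^ (2*(j+1)) * (p:ℂ) ^ ((k-2)*(j+1)) * a (p ^ (4*(j+1)+2-4*(j+1)) * t)) :=
      pascal_sum j (fun m => χ (p : ZMod N) ^ (2*m) * (p:ℂ) ^ ((k-2)*m) * a (p ^ (4*(j+1)+2-4*m) * t))
    rw [hsum, show 4*(j+1)+2-4*(j+1) = 2 from by omega, show 4*(j+1)+2-4*1 = 4*j+2 from by omega]
    have hA : ∑ m ∈ Icc 1 j, ((j+1).choose m : ℂ) *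
          (χ (p : ZMod N) ^ (2*m) * (p:ℂ) ^ ((k-2)*m) * a (p ^ (4*j+2-4*m) * (p ^ 4 * t)))
        = ∑ m ∈ Icc 1 j, ((j+1).choose m : ℂ) *
          (χ (p : ZMod N) ^ (2*m) * (p:ℂ) ^ ((k-2)*m) * a (p ^ (4*(j+1)+2-4*m) * t)) := by
      refine Finset.sum_congr rfl fun m hm => ?_
      have hm' := (Finset.mem_Icc.mp hm).2
      have : p ^ (4*j+2-4*m) * (p ^ 4 * t) = p ^ (4*(j+1)+2-4*m) * t := by
        rw [← mul_assoc, ← pow_add]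
        congr 2
        omega
      rw [this]
    have hB : χ (p : ZMod N) ^ 2 * (p:ℂ) ^ (k-2) * ∑ m ∈ Icc 1 j, ((j+1).choose m : ℂ) *
          (χ (p : ZMod N) ^ (2*m) * (p:ℂ) ^ ((k-2)*m) * a (p ^ (4*j+2-4*m) * t))
        = ∑ m ∈ Icc 1 j, ((j+1).choose m : ℂ) *
          (χ (p : ZMod N) ^ (2*(m+1)) * (p:ℂ) ^ ((k-2)*(m+1)) * a (p ^ (4*(j+1)+2-4*(m+1)) * t)) := by
      rw [Finset.mul_sum]
      refine Finset.sum_congr rfl fun m hm => ?_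
      have : p ^ (4*j+2-4*m) * t = p ^ (4*(j+1)+2-4*(m+1)) * t := by
        congr 2
        omega
      rw [this]
      ring
    rw [hA]
    linear_combination hB

/-- explicit formula for (U_p^ℓ a)(n) when p ∤ N and p^{2(ℓ−1)} ∣ n. -/
theorem Up_iterate_coeff_formula
    (k N : ℕ) (hk3 : 3 ≤ k) (hk : Odd k) (hN : 0 < N) (hN4 : 4 ∣ N)
    (χ : DirichletCharacter ℂ N) (p : ℕ) [Fact p.Prime] (hpN : ¬ p ∣ N)
    (a : ℕ → ℂ) (ℓ : ℕ) (hℓ : 0 < ℓ) (n : ℕ) (hn : 0 < n)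
    (hdvd : p ^ (2 * (ℓ - 1)) ∣ n) :
    (Uop k N χ p)^[ℓ] a n
      = a (n * p ^ (2 * ℓ))
        + ∑ m ∈ Finset.Icc 1 (ℓ - 1),
            (Nat.choose ℓ m : ℂ) * χ (p : ZMod N) ^ (2 * m) * (p : ℂ) ^ ((k - 2) * m) *
              (if 4 * m ≤ 2 * ℓ then a (n * p ^ (2 * ℓ - 4 * m))
               else a (n / p ^ (4 * m - 2 * ℓ)))
        + χ (p : ZMod N) ^ (2 * ℓ - 1) *
            ((legendreSym p
                ((-1) ^ ((k - 1) / 2) * ((n / p ^ (2 * ℓ - 2) : ℕ) : ℤ)) : ℤ) : ℂ) *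
            (p : ℂ) ^ ((k - 3) / 2 + (k - 2) * (ℓ - 1)) * a (n / p ^ (2 * ℓ - 2))
        + χ (p : ZMod N) ^ (2 * ℓ) * (p : ℂ) ^ ((k - 2) * ℓ) *
            (if p ^ (2 * ℓ) ∣ n then a (n / p ^ (2 * ℓ)) else 0) := by
  have hp : 0 < p := (Fact.out : p.Prime).pos
  obtain ⟨j, rfl⟩ : ∃ j, ℓ = j + 1 := ⟨ℓ - 1, by omega⟩
  simp only [Nat.add_sub_cancel] at hdvd ⊢
  obtain ⟨t, rfl⟩ := hdvd
  rw [Up_aux]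
  -- now rewrite the pieces of the RHS into the Up_aux form
  have e1 : p ^ (2 * j) * t * p ^ (2 * (j + 1)) = p ^ (4 * j + 2) * t := by
    rw [mul_right_comm, ← pow_add]; congr 2; omega
  have e2 : p ^ (2 * j) * t / p ^ (2 * (j + 1) - 2) = t := by
    rw [show 2 * (j + 1) - 2 = 2 * j from by omega]
    exact Nat.mul_div_cancel_left t (pow_pos hp _)
  have e3 : (2 * (j + 1) - 1) = 2 * j + 1 := by omega
  have e4 : (k - 3) / 2 + (k - 2) * j = (k - 1) / 2 - 1 + (k - 2) * j := by
    congr 1; omega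
  have e5 : p ^ (2 * (j + 1)) ∣ p ^ (2 * j) * t ↔ p ^ 2 ∣ t := by
    rw [show 2 * (j + 1) = 2 * j + 2 from by omega, pow_add]
    exact Nat.mul_dvd_mul_iff_left (pow_pos hp (2 * j))
  have e6 : p ^ (2 * j) * t / p ^ (2 * (j + 1)) = t / p ^ 2 := by
    rw [show 2 * (j + 1) = 2 * j + 2 from by omega, pow_add,
      ← Nat.div_div_eq_div_mul, Nat.mul_div_cancel_left t (pow_pos hp _)]
  have e7 : (if p ^ (2 * (j + 1)) ∣ p ^ (2 * j) * t then a (p ^ (2 * j) * t / p ^ (2 * (j + 1))) else 0)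
      = (if p ^ 2 ∣ t then a (t / p ^ 2) else 0) := by
    rw [e6]
    by_cases h : p ^ 2 ∣ t
    · rw [if_pos h, if_pos (e5.mpr h)]
    · rw [if_neg h, if_neg (fun hc => h (e5.mp hc))]
  have hsum : ∑ m ∈ Finset.Icc 1 j,
        (Nat.choose (j + 1) m : ℂ) * χ (p : ZMod N) ^ (2 * m) * (p : ℂ) ^ ((k - 2) * m) *
          (if 4 * m ≤ 2 * (j + 1) then a (p ^ (2 * j) * t * p ^ (2 * (j + 1) - 4 * m))
           else a (p ^ (2 * j) * t / p ^ (4 * m - 2 * (j + 1))))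
      = ∑ m ∈ Finset.Icc 1 j, ((j + 1).choose m : ℂ) *
          (χ (p : ZMod N) ^ (2 * m) * (p : ℂ) ^ ((k - 2) * m) * a (p ^ (4 * j + 2 - 4 * m) * t)) := by
    refine Finset.sum_congr rfl fun m hm => ?_
    have hm' := (Finset.mem_Icc.mp hm).2
    have hm1 := (Finset.mem_Icc.mp hm).1
    by_cases hc : 4 * m ≤ 2 * (j + 1)
    · rw [if_pos hc, show p ^ (2 * j) * t * p ^ (2 * (j + 1) - 4 * m) = p ^ (4 * j + 2 - 4 * m) * t from by
        rw [mul_right_comm, ← pow_add]; congr 2; omega]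
      ring
    · rw [if_neg hc, show p ^ (2 * j) * t / p ^ (4 * m - 2 * (j + 1)) = p ^ (4 * j + 2 - 4 * m) * t from by
        rw [show p ^ (2 * j) * t = p ^ (4 * m - 2 * (j + 1)) * (p ^ (4 * j + 2 - 4 * m) * t) from by
          rw [← mul_assoc, ← pow_add]; congr 2; omega,
          Nat.mul_div_cancel_left _ (pow_pos hp _)]]
      ring
  rw [e1, e2, e3, e4, e7, hsum]
  rw [show 2 * (j + 1) = 2 * j + 2 from by omega]
end

section
/- Let p be an odd prime, ℓ a positive integer, and n a positive integer. Then the product ( ∑_{m=0}^{p^{2ℓ−1} − 1} (m ∣ p)·exp(2πi·m·n/p^{2ℓ−1}) ) · ( ∑_{m′=0}^{p² − 1} exp(2πi·m′·n/p^{2ℓ}) ) = 0. -/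
open Finset

private lemma sum_range_mul' {β : Type*} [AddCommMonoid β] (f : ℕ → β) (a b : ℕ) :
    ∑ m ∈ Finset.range (a * b), f m
      = ∑ j ∈ Finset.range b, ∑ i ∈ Finset.range a, f (i + a * j) := by
  induction b with
  | zero => simp
  | succ b ih =>
      rw [Nat.mul_succ, Finset.sum_range_add, ih, Finset.sum_range_succ]
      congr 1
      exact Finset.sum_congr rfl fun i _ => by rw [Nat.add_comm]

private lemma exp_nat_div_eq_one (M m n : ℕ) (hM : M ≠ 0) (h : M ∣ n) :
    Complex.exp (2 * Real.pi * Complex.I * m * n / (M : ℂ)) = 1 := by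
  obtain ⟨c, rfl⟩ := h
  have hM' : (M : ℂ) ≠ 0 := Nat.cast_ne_zero.mpr hM
  have harg : (2 * (Real.pi : ℂ) * Complex.I * m * ((M * c : ℕ) : ℂ) / (M : ℂ))
      = ((m * c : ℤ) : ℂ) * (2 * Real.pi * Complex.I) := by
    push_cast; field_simp
  rw [harg, Complex.exp_int_mul_two_pi_mul_I]

private lemma geom_vanish (M N n : ℕ) (hM : M ≠ 0) (hdvd : M ∣ n * N)
    (hnd : ¬ M ∣ n) :
    ∑ b ∈ Finset.range N, Complex.exp (2 * Real.pi * Complex.I * b * n / (M : ℂ)) = 0 := by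
  have hM' : (M : ℂ) ≠ 0 := Nat.cast_ne_zero.mpr hM
  have hpi : (Real.pi : ℂ) ≠ 0 := by exact_mod_cast Real.pi_ne_zero
  have h2pi : (2 * (Real.pi : ℂ) * Complex.I) ≠ 0 :=
    mul_ne_zero (mul_ne_zero two_ne_zero hpi) Complex.I_ne_zero
  set z := Complex.exp (2 * Real.pi * Complex.I * n / (M : ℂ)) with hz
  have hzb : ∀ b : ℕ, Complex.exp (2 * Real.pi * Complex.I * b * n / (M : ℂ)) = z ^ b := by
    intro b
    rw [hz, ← Complex.exp_nat_mul]
    congr 1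
    ring
  have hz1 : z ≠ 1 := by
    intro h
    rw [hz, Complex.exp_eq_one_iff] at h
    obtain ⟨k, hk⟩ := h
    apply hnd
    have hnk : (n : ℂ) = k * M := by
      field_simp at hk
      apply mul_left_cancel₀ h2pi
      linear_combination (2 * (Real.pi : ℂ) * Complex.I) * hk
    have : (n : ℤ) = k * M := by exact_mod_cast hnk
    exact Int.natCast_dvd_natCast.mp ⟨k, by linarith⟩
  have hzN : z ^ N = 1 := by
    obtain ⟨c, hc⟩ := hdvd
    have hnc : (n : ℂ) * N = (M : ℂ) * c := by exact_mod_cast congrArg (Nat.cast : ℕ → ℂ) hc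
    rw [hz, ← Complex.exp_nat_mul]
    have harg : (N : ℂ) * (2 * Real.pi * Complex.I * n / (M : ℂ))
        = ((c : ℤ) : ℂ) * (2 * Real.pi * Complex.I) := by
      push_cast
      field_simp
      linear_combination hnc
    rw [harg, Complex.exp_int_mul_two_pi_mul_I]
  rw [Finset.sum_congr rfl fun b _ => hzb b, geom_sum_eq hz1, hzN, sub_self, zero_div]

private lemma legendre_range_sum_zero (p : ℕ) [Fact p.Prime] (hodd : p ≠ 2) :
    ∑ i ∈ Finset.range p, ((legendreSym p (i : ℤ) : ℤ) : ℂ) = 0 := by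
  have hp : 0 < p := (Fact.out : p.Prime).pos
  have : ∑ i ∈ Finset.range p, (legendreSym p (i : ℤ) : ℤ) = 0 := by
    have key : ∑ x : ZMod p, quadraticChar (ZMod p) x = 0 :=
      quadraticChar_sum_zero (by rwa [ZMod.ringChar_zmod_n])
    calc ∑ i ∈ Finset.range p, (legendreSym p (i : ℤ) : ℤ)
        = ∑ x : ZMod p, quadraticChar (ZMod p) x := by
          haveI : NeZero p := ⟨hp.ne'⟩
          refine Finset.sum_nbij' (fun i => ((i : ZMod p))) (fun x => x.val)
            (fun i _ => Finset.mem_univ _)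
            (fun x _ => Finset.mem_range.mpr (ZMod.val_lt x))
            (fun i hi => ZMod.val_cast_of_lt (Finset.mem_range.mp hi))
            (fun x _ => by simp [ZMod.natCast_val, ZMod.cast_id])
            (fun i _ => ?_)
          simp only [legendreSym, Int.cast_natCast]
        _ = 0 := key
  exact_mod_cast this

/-- for p an odd prime and positive integers ℓ, n,
    (∑_{m=0}^{p^{2ℓ−1}−1} (m ∣ p)·exp(2πi·m·n/p^{2ℓ−1}))
      · (∑_{m′=0}^{p²−1} exp(2πi·m′·n/p^{2ℓ})) = 0. -/
theorem gauss_sum_product_vanishes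
    (p : ℕ) [Fact p.Prime] (hodd : p ≠ 2) (ℓ n : ℕ) (hℓ : 0 < ℓ) (hn : 0 < n) :
    (∑ m ∈ Finset.range (p ^ (2 * ℓ - 1)),
        ((legendreSym p (m : ℤ) : ℤ) : ℂ) *
          Complex.exp (2 * Real.pi * Complex.I * m * n / (p : ℂ) ^ (2 * ℓ - 1)))
      * (∑ m' ∈ Finset.range (p ^ 2),
          Complex.exp (2 * Real.pi * Complex.I * m' * n / (p : ℂ) ^ (2 * ℓ))) = 0 := by
  have hp : 0 < p := (Fact.out : p.Prime).pos
  have hpc : (p : ℂ) ≠ 0 := Nat.cast_ne_zero.mpr hp.ne'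
  have hA : 2 * ℓ - 1 = (2 * ℓ - 2) + 1 := by omega
  set A := 2 * ℓ - 2 with hAdef
  have hpow : p ^ (2 * ℓ - 1) = p * p ^ A := by rw [hA, pow_succ']
  have hcast : ∀ e : ℕ, (p : ℂ) ^ e = ((p ^ e : ℕ) : ℂ) := by intro e; push_cast; ring
  have hχ : ∀ i j : ℕ, ((legendreSym p ((i + p * j : ℕ) : ℤ) : ℤ) : ℂ)
      = ((legendreSym p (i : ℤ) : ℤ) : ℂ) := by
    intro i j
    have h : legendreSym p ((i + p * j : ℕ) : ℤ) = legendreSym p (i : ℤ) := by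
      rw [show ((i + p * j : ℕ) : ℤ) = (i : ℤ) + (p : ℤ) * j by push_cast; ring]
      rw [legendreSym.mod, Int.add_mul_emod_self_left, ← legendreSym.mod]
    rw [h]
  by_cases h1 : p ^ A ∣ n
  · by_cases h2 : p ^ (2 * ℓ) ∣ n
    · -- first sum is ∑ χ(m) = 0
      have h3 : p ^ (2 * ℓ - 1) ∣ n := dvd_trans (pow_dvd_pow p (by omega)) h2
      have hS1 : (∑ m ∈ Finset.range (p ^ (2 * ℓ - 1)),
          ((legendreSym p (m : ℤ) : ℤ) : ℂ) *
            Complex.exp (2 * Real.pi * Complex.I * m * n / (p : ℂ) ^ (2 * ℓ - 1))) = 0 := by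
        have : ∀ m ∈ Finset.range (p ^ (2 * ℓ - 1)),
            ((legendreSym p (m : ℤ) : ℤ) : ℂ) *
              Complex.exp (2 * Real.pi * Complex.I * m * n / (p : ℂ) ^ (2 * ℓ - 1))
            = ((legendreSym p (m : ℤ) : ℤ) : ℂ) := by
          intro m _
          rw [hcast, exp_nat_div_eq_one _ _ _ (pow_ne_zero _ hp.ne') h3, mul_one]
        rw [Finset.sum_congr rfl this, hpow,
          sum_range_mul' (fun m => ((legendreSym p (m : ℤ) : ℤ) : ℂ)) p (p ^ A)]
        refine Finset.sum_eq_zero fun j _ => ?_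
        rw [Finset.sum_congr rfl fun i _ => hχ i j]
        exact legendre_range_sum_zero p hodd
      rw [hS1, zero_mul]
    · -- second sum vanishes
      have hS2 : (∑ m' ∈ Finset.range (p ^ 2),
          Complex.exp (2 * Real.pi * Complex.I * m' * n / (p : ℂ) ^ (2 * ℓ))) = 0 := by
        have hdvd : p ^ (2 * ℓ) ∣ n * p ^ 2 := by
          have : p ^ (2 * ℓ) = p ^ A * p ^ 2 := by rw [← pow_add]; congr 1; omega
          rw [this]
          exact mul_dvd_mul h1 dvd_rfl
        rw [show (∑ m' ∈ Finset.range (p ^ 2),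
            Complex.exp (2 * Real.pi * Complex.I * m' * n / (p : ℂ) ^ (2 * ℓ)))
          = ∑ m' ∈ Finset.range (p ^ 2),
            Complex.exp (2 * Real.pi * Complex.I * m' * n / ((p ^ (2 * ℓ) : ℕ) : ℂ)) from
          Finset.sum_congr rfl fun m' _ => by rw [hcast]]
        exact geom_vanish _ _ _ (pow_ne_zero _ hp.ne') hdvd h2
      rw [hS2, mul_zero]
  · -- first sum vanishes via factorization
    have hS1 : (∑ m ∈ Finset.range (p ^ (2 * ℓ - 1)),
        ((legendreSym p (m : ℤ) : ℤ) : ℂ) *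
          Complex.exp (2 * Real.pi * Complex.I * m * n / (p : ℂ) ^ (2 * ℓ - 1))) = 0 := by
      have hsplit : ∀ i j : ℕ,
          Complex.exp (2 * Real.pi * Complex.I * ((i + p * j : ℕ) : ℂ) * n
              / (p : ℂ) ^ (2 * ℓ - 1))
          = Complex.exp (2 * Real.pi * Complex.I * i * n / (p : ℂ) ^ (2 * ℓ - 1))
            * Complex.exp (2 * Real.pi * Complex.I * j * n / ((p ^ A : ℕ) : ℂ)) := by
        intro i j
        rw [← Complex.exp_add]
        congr 1
        have hPA : ((p ^ A : ℕ) : ℂ) ≠ 0 := Nat.cast_ne_zero.mpr (pow_ne_zero _ hp.ne')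
        have h2 : (p : ℂ) ^ (2 * ℓ - 1) = (p : ℂ) * ((p ^ A : ℕ) : ℂ) := by
          rw [hcast, hpow]; push_cast; ring
        rw [h2]
        push_cast
        field_simp
      rw [hpow, sum_range_mul' _ p (p ^ A)]
      have : ∀ j ∈ Finset.range (p ^ A),
          (∑ i ∈ Finset.range p,
            ((legendreSym p ((i + p * j : ℕ) : ℤ) : ℤ) : ℂ) *
              Complex.exp (2 * Real.pi * Complex.I * ((i + p * j : ℕ) : ℂ) * n
                / (p : ℂ) ^ (2 * ℓ - 1)))
          = Complex.exp (2 * Real.pi * Complex.I * j * n / ((p ^ A : ℕ) : ℂ))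
            * ∑ i ∈ Finset.range p,
              ((legendreSym p (i : ℤ) : ℤ) : ℂ) *
                Complex.exp (2 * Real.pi * Complex.I * i * n / (p : ℂ) ^ (2 * ℓ - 1)) := by
        intro j _
        rw [Finset.mul_sum]
        refine Finset.sum_congr rfl fun i _ => ?_
        rw [hχ i j, hsplit i j]
        ring
      rw [Finset.sum_congr rfl this, ← Finset.sum_mul,
        geom_vanish (p ^ A) (p ^ A) n (pow_ne_zero _ hp.ne') (dvd_mul_left _ _) h1,
        zero_mul]
    rw [hS1, zero_mul]
end
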